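/- arXiv:2004.01659 — 2 statements merged into one kernel-verified Lean document; each statement's English description precedes it below -/
import Mathlib

section
/- Σ_{π ∈ S_n} op_π(m) = (2m+1)^n, where op_π(m) = 4^{lpk(π)}·Σ_{a≥0} C(n+m-a, n)·C(n-2lpk(π), a-lpk(π)); equivalently, the left-enriched order polynomials of the n! chains sum to the order polynomial of the n-element antichain. -/
/-- The value of the permutation at position `j` (1-indexed), shifted by 1,
with the convention that out-of-range positions (in particular `j = 0`) give `0`. -/
def pval {n : ℕ} (π : Equiv.Perm (Fin n)) (j : ℕ) : ℕ :=
  if h : 1 ≤ j ∧ j ≤ n then ((π ⟨j - 1, by omega⟩ : Fin n) : ℕ) + 1 else 0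

/-- Number of descents of `π`: indices `i ∈ {1,…,n-1}` with `π(i) > π(i+1)`. -/
def des {n : ℕ} (π : Equiv.Perm (Fin n)) : ℕ :=
  ((Finset.Icc 1 (n - 1)).filter (fun i => pval π (i + 1) < pval π i)).card

/-- Number of left peaks of `π`: indices `i ∈ {1,…,n-1}` with
`π(i-1) < π(i) > π(i+1)`, with the convention `π(0) = 0`. -/
def lpk {n : ℕ} (π : Equiv.Perm (Fin n)) : ℕ :=
  ((Finset.Icc 1 (n - 1)).filter
    (fun i => pval π (i - 1) < pval π i ∧ pval π (i + 1) < pval π i)).card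

/-- Number of interior peaks of `π`: indices `i ∈ {2,…,n-1}` with
`π(i-1) < π(i) > π(i+1)`. -/
def pk {n : ℕ} (π : Equiv.Perm (Fin n)) : ℕ :=
  ((Finset.Icc 2 (n - 1)).filter
    (fun i => pval π (i - 1) < pval π i ∧ pval π (i + 1) < pval π i)).card

/-- Binomial coefficient for integer arguments, with the convention that it is
zero when `b < 0` or `a < b`. -/
def zchoose (a b : ℤ) : ℤ :=
  if 0 ≤ b ∧ b ≤ a then ((a.toNat).choose b.toNat : ℤ) else 0

/-- The left-enriched order polynomial of a chain on `n` elements with `k` left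
peaks, evaluated at `m`:  `4^k · Σ_{a≥0} C(n+m-a, n)·C(n-2k, a-k)`
(reindexed by `a = k + b`; terms with `b > n` vanish). -/
def opL (n k m : ℕ) : ℤ :=
  4 ^ k * ∑ b ∈ Finset.range (n + 1),
    zchoose ((n : ℤ) + m - (k + b)) n * zchoose ((n : ℤ) - 2 * k) b

/-- The enriched order polynomial of a chain on `n` elements with `k` peaks,
evaluated at `m`: `2·4^k · Σ_{a≥0} C(n-1+m-a, n)·C(n-1-2k, a-k)`
(reindexed by `a = k + b`; terms with `b > n` vanish). -/
def opStar (n k m : ℕ) : ℤ :=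
  2 * 4 ^ k * ∑ b ∈ Finset.range (n + 1),
    zchoose ((n : ℤ) - 1 + m - (k + b)) n * zchoose ((n : ℤ) - 1 - 2 * k) b

open Polynomial
noncomputable def convZ (Q : Polynomial ℤ) (d m : ℕ) : ℤ :=
  ∑ j ∈ Finset.range (m+1), Q.coeff j * (Nat.choose (d + (m - j)) d : ℤ)

lemma convZ_add (Q R : Polynomial ℤ) (d m : ℕ) :
    convZ (Q + R) d m = convZ Q d m + convZ R d m := by
  simp [convZ, add_mul, Finset.sum_add_distrib]

lemma convZ_Cmul (a : ℤ) (Q : Polynomial ℤ) (d m : ℕ) :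
    convZ (C a * Q) d m = a * convZ Q d m := by
  simp [convZ, coeff_C_mul, mul_assoc, Finset.mul_sum]

lemma convZ_X_mul (Q : Polynomial ℤ) (d m : ℕ) :
    convZ (X * Q) (d+1) m = ∑ j ∈ Finset.range (m+1), Q.coeff j * (Nat.choose (d + (m - j)) (d+1) : ℤ) := by
  rcases m with _ | m
  · simp [convZ, Polynomial.mul_coeff_zero]
  · rw [convZ]
    nth_rewrite 1 [Finset.sum_range_succ']
    conv_rhs => rw [Finset.sum_range_succ]
    have h0 : (X * Q).coeff 0 = 0 := by simp [Polynomial.mul_coeff_zero]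
    rw [h0]
    have hlast : Q.coeff (m+1) * (Nat.choose (d + (m + 1 - (m+1))) (d+1) : ℤ) = 0 := by
      simp [Nat.choose_succ_self]
    rw [hlast]
    simp only [zero_mul, add_zero, coeff_X_mul]
    apply Finset.sum_congr rfl
    intro j hj
    simp only [Finset.mem_range] at hj
    have h2 : d + 1 + (m + 1 - (j+1)) = d + (m+1-j) := by omega
    rw [h2]

lemma convZ_one_sub_mul (Q : Polynomial ℤ) (d m : ℕ) :
    convZ ((1 - X) * Q) (d+1) m = convZ Q d m := by
  have h : (1 - X) * Q = Q - X * Q := by ring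
  rw [h]
  have hsub : convZ (Q - X * Q) (d+1) m = convZ Q (d+1) m - convZ (X*Q) (d+1) m := by
    simp [convZ, sub_mul, Finset.sum_sub_distrib]
  rw [hsub, convZ_X_mul, convZ]
  rw [← Finset.sum_sub_distrib]
  apply Finset.sum_congr rfl
  intro j hj
  rw [← mul_sub]
  congr 1
  have : (d + 1 + (m - j)) = (d + (m-j)) + 1 := by omega
  rw [this, Nat.choose_succ_succ' (d + (m-j)) d]
  push_cast
  ring

lemma coeff_X_mul_derivative (Q : Polynomial ℤ) (j : ℕ) :
    (X * derivative Q).coeff j = (j : ℤ) * Q.coeff j := by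
  rcases j with _ | j
  · simp [Polynomial.mul_coeff_zero]
  · rw [coeff_X_mul, coeff_derivative]
    push_cast
    ring

lemma convZ_deriv (Q : Polynomial ℤ) (d m : ℕ) :
    convZ (C 2 * (X * ((1-X) * derivative Q)) + C (2*(d:ℤ)+2) * (X * Q) + (1 - X) * Q) (d+1) m
      = (2*(m:ℤ)+1) * convZ Q d m := by
  rw [convZ_add, convZ_add, convZ_Cmul, convZ_Cmul, convZ_one_sub_mul]
  have hcomm : (X * ((1-X) * derivative Q)) = (1 - X) * (X * derivative Q) := by ring
  rw [hcomm, convZ_one_sub_mul, convZ_X_mul]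
  rw [convZ, convZ, Finset.mul_sum, Finset.mul_sum, Finset.mul_sum, ← Finset.sum_add_distrib,
    ← Finset.sum_add_distrib]
  apply Finset.sum_congr rfl
  intro j hj
  simp only [Finset.mem_range] at hj
  rw [coeff_X_mul_derivative]
  have hk : ((d:ℤ)+1) * (Nat.choose (d + (m-j)) (d+1) : ℤ) = ((m-j : ℕ) : ℤ) * (Nat.choose (d + (m-j)) d : ℤ) := by
    have := Nat.choose_succ_right_eq (d + (m-j)) d
    have h2 : d + (m-j) - d = m - j := by omega
    rw [h2] at this
    have hz : ((d + (m-j)).choose (d+1) : ℤ) * ((d:ℤ)+1) = ((d+(m-j)).choose d : ℤ) * ((m-j : ℕ):ℤ) := by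
      exact_mod_cast this
    linarith [hz]
  have hs : (j : ℤ) + ((m - j : ℕ) : ℤ) = (m : ℤ) := by
    omega
  linear_combination (2 * Q.coeff j) * hk + (2 * Q.coeff j * (Nat.choose (d + (m-j)) d : ℤ)) * hs

lemma zc1_eq (n k b m : ℕ) :
    zchoose ((n:ℤ) + m - (k + b)) n
      = if k + b ≤ m then (Nat.choose (n + (m - (k+b))) n : ℤ) else 0 := by
  rw [zchoose]
  rcases le_or_gt (k+b) m with hle | hlt
  · rw [if_pos (by constructor <;> omega), if_pos hle]
    have h1 : ((n:ℤ) + m - (k + b)).toNat = n + (m - (k+b)) := by omega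
    have h2 : ((n:ℤ)).toNat = n := by omega
    rw [h1, h2]
  · rw [if_neg (by omega), if_neg (by omega)]

lemma zc2_eq (d b : ℕ) :
    zchoose ((d:ℤ)) b = if b ≤ d then (Nat.choose d b : ℤ) else 0 := by
  rw [zchoose]
  rcases le_or_gt b d with hle | hlt
  · rw [if_pos (by constructor <;> omega), if_pos hle]
    have h1 : ((d:ℤ)).toNat = d := by omega
    have h2 : ((b:ℤ)).toNat = b := by omega
    rw [h1, h2]
  · rw [if_neg (by omega), if_neg (by omega)]

lemma opL_eq_convZ (n k m : ℕ) (h : 2*k ≤ n) :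
    opL n k m = convZ (C ((4:ℤ)^k) * ((X+1)^(n-2*k) * X^k)) n m := by
  set d := n - 2*k with hd
  -- the common function
  set g : ℕ → ℤ := fun b =>
    (Nat.choose d b : ℤ) * (if k + b ≤ m then (Nat.choose (n + (m - (k+b))) n : ℤ) else 0) with hg
  have hgzero_big : ∀ b, m < k + b → g b = 0 := by
    intro b hb
    simp only [hg]
    rw [if_neg (by omega : ¬ k + b ≤ m)]
    ring
  have hgzero_d : ∀ b, d < b → g b = 0 := by
    intro b hb
    simp only [hg, Nat.choose_eq_zero_of_lt hb]
    push_cast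
    ring
  -- opL side
  have hopL : opL n k m = 4^k * ∑ b ∈ Finset.range (n+1), g b := by
    rw [opL]
    congr 1
    apply Finset.sum_congr rfl
    intro b _
    have hcast : (n:ℤ) - 2*k = ((d:ℕ) : ℤ) := by omega
    rw [hcast, zc2_eq, zc1_eq]
    simp only [hg]
    rcases le_or_gt b d with hle | hlt
    · rw [if_pos hle]; ring
    · rw [if_neg (by omega : ¬ b ≤ d), Nat.choose_eq_zero_of_lt hlt]
      push_cast
      ring
  -- convZ side
  set F : ℕ → ℤ := fun j =>
    (if k ≤ j then ((Nat.choose d (j - k)) : ℤ) else 0)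
      * (if j ≤ m then (Nat.choose (n + (m - j)) n : ℤ) else 0) with hF
  have hconvZ : convZ (C ((4:ℤ)^k) * ((X+1)^d * X^k)) n m = 4^k * ∑ j ∈ Finset.range (m+1), F j := by
    rw [convZ, Finset.mul_sum]
    apply Finset.sum_congr rfl
    intro j hj
    simp only [Finset.mem_range] at hj
    rw [coeff_C_mul, coeff_mul_X_pow', coeff_X_add_one_pow]
    simp only [hF, if_pos (by omega : j ≤ m)]
    split_ifs with hkj
    · ring
    · ring
  have hFk : ∀ b, F (k + b) = g b := by
    intro b
    simp only [hF, hg, if_pos (Nat.le_add_right k b)]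
    have hkb : k + b - k = b := by omega
    rw [hkb]
  have hFsmall : ∀ j, j < k → F j = 0 := by
    intro j hjk
    simp only [hF]
    rw [if_neg (by omega : ¬ k ≤ j)]
    ring
  have hFbig : ∀ j, m < j → F j = 0 := by
    intro j hjm
    simp only [hF]
    rw [if_neg (by omega : ¬ j ≤ m)]
    ring
  -- chain of equalities
  have e1 : ∑ b ∈ Finset.range (n+1), g b = ∑ b ∈ Finset.range (n+m+2), g b := by
    apply Finset.sum_subset
    · apply Finset.range_subset_range.2; omega
    · intro b _ hb
      simp only [Finset.mem_range, not_lt] at hb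
      exact hgzero_d b (by omega)
  have e2 : ∑ b ∈ Finset.range (n+m+2), g b = ∑ b ∈ Finset.range (m+1), g b := by
    symm
    apply Finset.sum_subset
    · apply Finset.range_subset_range.2; omega
    · intro b _ hb
      simp only [Finset.mem_range, not_lt] at hb
      exact hgzero_big b (by omega)
  have e3 : ∑ j ∈ Finset.range (m+1), F j = ∑ j ∈ Finset.range (k+(m+1)), F j := by
    apply Finset.sum_subset
    · apply Finset.range_subset_range.2; omega
    · intro j _ hj
      simp only [Finset.mem_range, not_lt] at hj
      exact hFbig j (by omega)
  have e4 : ∑ j ∈ Finset.range (k+(m+1)), F j = ∑ b ∈ Finset.range (m+1), g b := by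
    rw [Finset.sum_range_add]
    have : ∑ j ∈ Finset.range k, F j = 0 := by
      apply Finset.sum_eq_zero
      intro j hj
      simp only [Finset.mem_range] at hj
      exact hFsmall j hj
    rw [this, zero_add]
    exact Finset.sum_congr rfl (fun b _ => hFk b)
  rw [hopL, hconvZ, e1, e2, ← e4, ← e3]

lemma polyid (k d : ℕ) :
    C (2*(k:ℤ)+1) * (C ((4:ℤ)^k) * ((X+1)^(d+1) * X^k))
      + C ((d:ℤ)) * (C ((4:ℤ)^(k+1)) * ((X+1)^(d-1) * X^(k+1)))
    = C 2 * (X * ((1-X) * derivative (C ((4:ℤ)^k) * ((X+1)^d * X^k))))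
      + C (2*((2*k+d : ℕ):ℤ)+2) * (X * (C ((4:ℤ)^k) * ((X+1)^d * X^k)))
      + (1-X) * (C ((4:ℤ)^k) * ((X+1)^d * X^k)) := by
  have hder : derivative (C ((4:ℤ)^k) * ((X+1)^d * X^k))
      = C ((4:ℤ)^k) * ((C ((d:ℤ)) * (X+1)^(d-1)) * X^k + (X+1)^d * (C ((k:ℤ)) * X^(k-1))) := by
    rw [derivative_C_mul, derivative_mul, derivative_pow, derivative_pow, derivative_X,
      derivative_add, derivative_X, derivative_one]
    ring
  rw [hder]
  have hC : ∀ z : ℤ, (C z : Polynomial ℤ) = (z : Polynomial ℤ) := fun _ => rfl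
  rcases k with _ | k <;> rcases d with _ | d <;>
    simp only [hC, Nat.add_sub_cancel, Nat.zero_sub, Nat.succ_sub_one] <;> push_cast <;> ring

lemma opL_rec (n k m : ℕ) (h : 2*k ≤ n) :
    (2*(k:ℤ)+1) * opL (n+1) k m + ((n:ℤ) - 2*k) * opL (n+1) (k+1) m
      = (2*(m:ℤ)+1) * opL n k m := by
  set d := n - 2*k with hd
  have h1 : opL (n+1) k m = convZ (C ((4:ℤ)^k) * ((X+1)^(d+1) * X^k)) (n+1) m := by
    have := opL_eq_convZ (n+1) k m (by omega)
    rwa [show n+1-2*k = d+1 by omega] at this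
  have h2 : ((n:ℤ) - 2*k) * opL (n+1) (k+1) m
      = (d:ℤ) * convZ (C ((4:ℤ)^(k+1)) * ((X+1)^(d-1) * X^(k+1))) (n+1) m := by
    have hnd : (n:ℤ) - 2*k = (d:ℤ) := by omega
    rw [hnd]
    rcases Nat.eq_zero_or_pos d with h0 | hpos
    · rw [h0]; push_cast; ring
    · congr 1
      have := opL_eq_convZ (n+1) (k+1) m (by omega)
      rwa [show n+1-2*(k+1) = d-1 by omega] at this
  have h3 : (2*(m:ℤ)+1) * opL n k m
      = convZ (C 2 * (X * ((1-X) * derivative (C ((4:ℤ)^k) * ((X+1)^d * X^k))))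
          + C (2*((n:ℕ):ℤ)+2) * (X * (C ((4:ℤ)^k) * ((X+1)^d * X^k)))
          + (1-X) * (C ((4:ℤ)^k) * ((X+1)^d * X^k))) (n+1) m := by
    rw [opL_eq_convZ n k m h, ← hd, convZ_deriv]
  rw [h1, h2, h3]
  rw [← convZ_Cmul (2*(k:ℤ)+1), ← convZ_Cmul ((d:ℤ)), ← convZ_add]
  congr 1
  have := polyid k d
  rwa [show 2*k+d = n by omega] at this

def wIns (n : ℕ) (v : ℕ → ℕ) (s j : ℕ) : ℕ :=
  if j < s then v j else if j = s then n+1 else v (j-1)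

def peaksW (v : ℕ → ℕ) (N : ℕ) : Finset ℕ :=
  (Finset.Icc 1 (N-1)).filter (fun i => v (i-1) < v i ∧ v (i+1) < v i)

lemma lpk_eq_peaksW {n : ℕ} (π : Equiv.Perm (Fin n)) : lpk π = (peaksW (pval π) n).card := rfl

lemma peaksW_subset (v : ℕ → ℕ) (N : ℕ) : peaksW v N ⊆ Finset.Icc 1 (N-1) :=
  Finset.filter_subset _ _

lemma peaks_nonadj {v : ℕ → ℕ} {N q : ℕ} (hq : q ∈ peaksW v N) : q + 1 ∉ peaksW v N := by
  intro hq1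
  rw [peaksW, Finset.mem_filter] at hq hq1
  have h1 := hq.2.2
  have h2 := hq1.2.1
  simp only [Nat.add_sub_cancel] at h2
  omega

section slot

variable {n : ℕ} {v : ℕ → ℕ} (hvle : ∀ j, v j ≤ n) {s : ℕ} (hs1 : 1 ≤ s) (hs2 : s ≤ n+1)

lemma wIns_lt {j : ℕ} (h : j < s) : wIns n v s j = v j := if_pos h
lemma wIns_self : wIns n v s s = n+1 := by rw [wIns, if_neg (lt_irrefl s), if_pos rfl]
lemma wIns_gt {j : ℕ} (h : s < j) : wIns n v s j = v (j-1) := by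
  rw [wIns, if_neg (by omega), if_neg (by omega)]

include hvle hs1 hs2 in
lemma peak_iff {i : ℕ} (hi : i ∈ Finset.Icc 1 n) :
    i ∈ peaksW (wIns n v s) (n+1)
      ↔ (i = s ∨ (i+1 < s ∧ i ∈ peaksW v n) ∨ (s+1 < i ∧ i-1 ∈ peaksW v n)) := by
  simp only [Finset.mem_Icc] at hi
  rw [peaksW, Finset.mem_filter, Finset.mem_Icc]
  simp only [Nat.add_sub_cancel]
  rcases Nat.lt_trichotomy (i+1) s with hlt | heq1 | hgt1
  · -- i + 1 < s
    rw [wIns_lt (by omega : i-1 < s), wIns_lt (by omega : i < s), wIns_lt hlt]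
    rw [peaksW, Finset.mem_filter, Finset.mem_Icc]
    constructor
    · rintro ⟨_, hc⟩; exact Or.inr (Or.inl ⟨hlt, ⟨⟨by omega, by omega⟩, hc⟩⟩)
    · rintro (h | ⟨_, ⟨_, hc⟩⟩ | ⟨h, _⟩) <;> first | omega | exact ⟨⟨by omega, by omega⟩, hc⟩
  · -- i + 1 = s, i.e. i = s - 1
    rw [wIns_lt (by omega : i-1 < s), wIns_lt (by omega : i < s), heq1, wIns_self]
    have := hvle i
    constructor
    · rintro ⟨_, _, hc⟩; omega
    · rintro (h | ⟨h, _⟩ | ⟨h, _⟩) <;> omega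
  · rcases Nat.lt_trichotomy i s with hlt2 | heq | hgt2
    · omega
    · -- i = s
      subst heq
      rw [wIns_lt (by omega : i-1 < i), wIns_self, wIns_gt (by omega : i < i+1)]
      simp only [Nat.add_sub_cancel]
      have h1 := hvle (i-1)
      have h2 := hvle i
      constructor
      · intro _; exact Or.inl trivial
      · intro _; exact ⟨⟨by omega, by omega⟩, by omega, by omega⟩
    · rcases Nat.lt_trichotomy i (s+1) with h3 | h3 | h3
      · omega
      · -- i = s + 1
        have hie : i - 1 = s := by omega
        rw [wIns_gt (by omega : s < i+1), wIns_gt hgt2, hie, wIns_self]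
        have hb := hvle s
        constructor
        · rintro ⟨hc, _⟩; omega
        · rintro (h | ⟨h, _⟩ | ⟨h, _⟩) <;> omega
      · -- s + 1 < i
        rw [wIns_gt (by omega : s < i-1), wIns_gt hgt2, wIns_gt (by omega : s < i+1)]
        simp only [peaksW, Finset.mem_filter, Finset.mem_Icc, Nat.add_sub_cancel]
        have e1 : i - 1 - 1 = i - 2 := by omega
        have e2 : i - 1 + 1 = i := by omega
        rw [e1, e2]
        constructor
        · rintro ⟨_, hc1, hc2⟩
          exact Or.inr (Or.inr ⟨h3, ⟨by omega, by omega⟩, hc1, hc2⟩)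
        · rintro (h | ⟨h, _⟩ | ⟨_, _, hc1, hc2⟩)
          · omega
          · omega
          · exact ⟨⟨by omega, by omega⟩, hc1, hc2⟩
  done

end slot

section slot2

variable {n : ℕ} {v : ℕ → ℕ} (hvle : ∀ j, v j ≤ n) {s : ℕ} (hs1 : 1 ≤ s) (hs2 : s ≤ n+1)

include hvle hs1 hs2 in
lemma card_peaks_wIns :
    (peaksW (wIns n v s) (n+1)).card
      = ((peaksW v n) \ {s-1, s}).card + (if s ≤ n then 1 else 0) := by
  classical
  have hmem : ∀ i, i ∈ peaksW (wIns n v s) (n+1) →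
      (i = s ∨ (i+1 < s ∧ i ∈ peaksW v n) ∨ (s+1 < i ∧ i-1 ∈ peaksW v n)) := by
    intro i hi
    have hIcc : i ∈ Finset.Icc 1 n := by
      have := peaksW_subset (wIns n v s) (n+1) hi
      simpa using this
    exact (peak_iff hvle hs1 hs2 hIcc).1 hi
  have hmem' : ∀ i, i ∈ Finset.Icc 1 n →
      (i = s ∨ (i+1 < s ∧ i ∈ peaksW v n) ∨ (s+1 < i ∧ i-1 ∈ peaksW v n)) →
      i ∈ peaksW (wIns n v s) (n+1) := by
    intro i hIcc h
    exact (peak_iff hvle hs1 hs2 hIcc).2 h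
  -- whether s is a new peak
  have hsmem : s ∈ peaksW (wIns n v s) (n+1) ↔ s ≤ n := by
    constructor
    · intro h
      have := peaksW_subset (wIns n v s) (n+1) h
      simp only [Finset.mem_Icc, Nat.add_sub_cancel] at this
      omega
    · intro h
      exact hmem' s (by simp [Finset.mem_Icc]; omega) (Or.inl rfl)
  have hcard : ((peaksW (wIns n v s) (n+1)).erase s).card = ((peaksW v n) \ {s-1, s}).card := by
    apply Finset.card_bij' (fun i _ => if i < s then i else i - 1)
      (fun q _ => if q < s then q else q + 1)
    · intro i hi
      rw [Finset.mem_erase] at hi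
      rcases hmem i hi.2 with h | ⟨h1, h2⟩ | ⟨h1, h2⟩
      · exact absurd h hi.1
      · rw [if_pos (by omega)]
        simp only [Finset.mem_sdiff, Finset.mem_insert, Finset.mem_singleton]
        exact ⟨h2, by omega⟩
      · rw [if_neg (by omega)]
        simp only [Finset.mem_sdiff, Finset.mem_insert, Finset.mem_singleton]
        exact ⟨h2, by omega⟩
    · intro q hq
      simp only [Finset.mem_sdiff, Finset.mem_insert, Finset.mem_singleton] at hq
      obtain ⟨hq1, hq2⟩ := hq
      have hqIcc : q ∈ Finset.Icc 1 (n-1) := peaksW_subset v n hq1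
      simp only [Finset.mem_Icc] at hqIcc
      rcases lt_or_ge q s with hlt | hge
      · rw [if_pos hlt, Finset.mem_erase]
        exact ⟨by omega, hmem' q (by simp only [Finset.mem_Icc]; omega)
          (Or.inr (Or.inl ⟨by omega, hq1⟩))⟩
      · rw [if_neg (by omega), Finset.mem_erase]
        refine ⟨by omega, hmem' (q+1) (by simp only [Finset.mem_Icc]; omega)
          (Or.inr (Or.inr ⟨by omega, ?_⟩))⟩
        simpa using hq1
    · intro i hi
      rw [Finset.mem_erase] at hi
      rcases hmem i hi.2 with h | ⟨h1, h2⟩ | ⟨h1, h2⟩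
      · exact absurd h hi.1
      · split_ifs <;> omega
      · split_ifs <;> omega
    · intro q hq
      simp only [Finset.mem_sdiff, Finset.mem_insert, Finset.mem_singleton] at hq
      have hqIcc : q ∈ Finset.Icc 1 (n-1) := peaksW_subset v n hq.1
      simp only [Finset.mem_Icc] at hqIcc
      split_ifs <;> omega
  rcases le_or_gt s n with hsn | hsn
  · rw [if_pos hsn]
    rw [← hcard]
    rw [Finset.card_erase_of_mem (hsmem.2 hsn)]
    have : s ∈ peaksW (wIns n v s) (n+1) := hsmem.2 hsn
    have hpos : 0 < (peaksW (wIns n v s) (n+1)).card := Finset.card_pos.2 ⟨s, this⟩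
    omega
  · rw [if_neg (by omega)]
    rw [← hcard, Finset.erase_eq_of_notMem (fun h => by have := hsmem.1 h; omega)]
    omega

end slot2

section slot3

variable {n : ℕ} {v : ℕ → ℕ} (hvle : ∀ j, v j ≤ n)

include hvle in
lemma lpk_wIns_val {s : ℕ} (hs1 : 1 ≤ s) (hs2 : s ≤ n+1) :
    (peaksW (wIns n v s) (n+1)).card
      = if s ≤ n ∧ (s-1) ∉ peaksW v n ∧ s ∉ peaksW v n
        then (peaksW v n).card + 1 else (peaksW v n).card := by
  classical
  rw [card_peaks_wIns hvle hs1 hs2]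
  set pk := peaksW v n with hpk
  by_cases h1 : s - 1 ∈ pk
  · have h2 : s ∉ pk := by
      have := peaks_nonadj (v := v) (N := n) (q := s-1) h1
      have hs : s - 1 + 1 = s := by omega
      rwa [hs] at this
    have hsd : pk \ {s-1, s} = pk.erase (s-1) := by
      ext x
      simp only [Finset.mem_sdiff, Finset.mem_insert, Finset.mem_singleton, Finset.mem_erase]
      constructor
      · rintro ⟨hx, hx2⟩; exact ⟨by omega, hx⟩
      · rintro ⟨hx1, hx⟩
        refine ⟨hx, ?_⟩
        rintro (h | h)
        · exact hx1 h
        · subst h; exact h2 hx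
    have hbd := peaksW_subset v n h1
    simp only [Finset.mem_Icc] at hbd
    rw [hsd, Finset.card_erase_of_mem h1,
      if_neg (show ¬(s ≤ n ∧ (s-1) ∉ pk ∧ s ∉ pk) by tauto), if_pos (by omega : s ≤ n)]
    have : 0 < pk.card := Finset.card_pos.2 ⟨s-1, h1⟩
    omega
  · by_cases h2 : s ∈ pk
    · have hsd : pk \ {s-1, s} = pk.erase s := by
        ext x
        simp only [Finset.mem_sdiff, Finset.mem_insert, Finset.mem_singleton, Finset.mem_erase]
        constructor
        · rintro ⟨hx, hx2⟩; exact ⟨by omega, hx⟩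
        · rintro ⟨hx1, hx⟩
          refine ⟨hx, ?_⟩
          rintro (h | h)
          · subst h; exact h1 hx
          · exact hx1 h
      have hbd := peaksW_subset v n h2
      simp only [Finset.mem_Icc] at hbd
      rw [hsd, Finset.card_erase_of_mem h2,
        if_neg (show ¬(s ≤ n ∧ (s-1) ∉ pk ∧ s ∉ pk) by tauto), if_pos (by omega : s ≤ n)]
      have : 0 < pk.card := Finset.card_pos.2 ⟨s, h2⟩
      omega
    · have hsd : pk \ {s-1, s} = pk := by
        apply Finset.sdiff_eq_self_iff_disjoint.2
        simp only [Finset.disjoint_left]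
        intro x hx
        simp only [Finset.mem_insert, Finset.mem_singleton]
        rintro (h | h)
        · subst h; exact h1 hx
        · subst h; exact h2 hx
      rw [hsd]
      rcases le_or_gt s n with hsn | hsn
      · rw [if_pos hsn, if_pos (show s ≤ n ∧ (s-1) ∉ pk ∧ s ∉ pk from ⟨hsn, h1, h2⟩)]
      · rw [if_neg (by omega : ¬ s ≤ n),
          if_neg (show ¬(s ≤ n ∧ (s-1) ∉ pk ∧ s ∉ pk) from fun hx => by exact absurd hx.1 (by omega))]
        omega

lemma two_lpk_le : 2 * (peaksW v n).card ≤ n := by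
  classical
  set pk := peaksW v n with hpk
  have hB : pk.biUnion (fun q => ({q, q+1} : Finset ℕ)) ⊆ Finset.Icc 1 n := by
    intro x hx
    simp only [Finset.mem_biUnion, Finset.mem_insert, Finset.mem_singleton] at hx
    obtain ⟨q, hq, hx⟩ := hx
    have := peaksW_subset v n hq
    simp only [Finset.mem_Icc] at this ⊢
    omega
  have hcard : (pk.biUnion (fun q => ({q, q+1} : Finset ℕ))).card = 2 * pk.card := by
    rw [Finset.card_biUnion]
    · rw [Finset.sum_congr rfl (fun q _ => by
        rw [Finset.card_insert_of_notMem (by simp), Finset.card_singleton])]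
      rw [Finset.sum_const, smul_eq_mul]
      ring
    · intro q1 hq1 q2 hq2 hne
      simp only [Finset.disjoint_left, Finset.mem_insert, Finset.mem_singleton]
      rintro x (h | h) (h' | h')
      · omega
      · exfalso
        apply peaks_nonadj hq2
        rw [← h', h]
        exact hq1
      · exfalso
        apply peaks_nonadj hq1
        rw [← h, h']
        exact hq2
      · omega
  have := Finset.card_le_card hB
  rw [hcard] at this
  simpa using this

include hvle in
lemma sum_slots (g : ℕ → ℤ) :
    ∑ s ∈ Finset.Icc 1 (n+1), g ((peaksW (wIns n v s) (n+1)).card)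
      = (2*((peaksW v n).card : ℤ)+1) * g ((peaksW v n).card)
        + ((n:ℤ) - 2*((peaksW v n).card : ℤ)) * g ((peaksW v n).card + 1) := by
  classical
  set pk := peaksW v n with hpk
  set k := pk.card with hk
  have hval : ∀ s ∈ Finset.Icc 1 (n+1),
      g ((peaksW (wIns n v s) (n+1)).card)
        = if s ≤ n ∧ (s-1) ∉ pk ∧ s ∉ pk then g (k+1) else g k := by
    intro s hs
    simp only [Finset.mem_Icc] at hs
    rw [lpk_wIns_val hvle hs.1 hs.2]
    split_ifs <;> rfl
  rw [Finset.sum_congr rfl hval]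
  rw [Finset.sum_ite]
  rw [Finset.sum_const, Finset.sum_const, nsmul_eq_mul, nsmul_eq_mul]
  -- count the bad slots
  have hbad : ((Finset.Icc 1 (n+1)).filter
      (fun s => ¬(s ≤ n ∧ (s-1) ∉ pk ∧ s ∉ pk))).card = 2*k+1 := by
    have heq : (Finset.Icc 1 (n+1)).filter (fun s => ¬(s ≤ n ∧ (s-1) ∉ pk ∧ s ∉ pk))
        = insert (n+1) (pk.biUnion (fun q => ({q, q+1} : Finset ℕ))) := by
      ext s
      simp only [Finset.mem_filter, Finset.mem_Icc, Finset.mem_insert, Finset.mem_biUnion,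
        Finset.mem_insert, Finset.mem_singleton]
      constructor
      · rintro ⟨⟨hs1, hs2⟩, hbad⟩
        rcases le_or_gt s n with hsn | hsn
        · right
          push_neg at hbad
          rcases Classical.em ((s-1) ∈ pk) with h | h
          · exact ⟨s-1, h, Or.inr (by omega)⟩
          · exact ⟨s, hbad hsn h, Or.inl rfl⟩
        · left; omega
      · rintro (h | ⟨q, hq, hx⟩)
        · subst h
          exact ⟨⟨by omega, le_refl _⟩, by intro hc; omega⟩
        · have hb := peaksW_subset v n hq
          simp only [Finset.mem_Icc] at hb
          refine ⟨⟨by omega, by omega⟩, ?_⟩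
          rintro ⟨hsn, hc1, hc2⟩
          rcases hx with h | h
          · exact hc2 (h ▸ hq)
          · apply hc1
            have : s - 1 = q := by omega
            rw [this]; exact hq
    rw [heq, Finset.card_insert_of_notMem]
    · -- card of biUnion is 2k (same computation as in two_lpk_le)
      congr 1
      rw [Finset.card_biUnion]
      · rw [Finset.sum_congr rfl (fun q _ => by
          rw [Finset.card_insert_of_notMem (by simp), Finset.card_singleton])]
        rw [Finset.sum_const, smul_eq_mul]
        ring
      · intro q1 hq1 q2 hq2 hne
        simp only [Finset.disjoint_left, Finset.mem_insert, Finset.mem_singleton]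
        rintro x (h | h) (h' | h')
        · omega
        · exfalso
          apply peaks_nonadj hq2
          rw [← h', h]
          exact hq1
        · exfalso
          apply peaks_nonadj hq1
          rw [← h, h']
          exact hq2
        · omega
    · intro hc
      simp only [Finset.mem_biUnion, Finset.mem_insert, Finset.mem_singleton] at hc
      obtain ⟨q, hq, hx⟩ := hc
      have := peaksW_subset v n hq
      simp only [Finset.mem_Icc] at this
      omega
  have hgood : ((Finset.Icc 1 (n+1)).filter
      (fun s => (s ≤ n ∧ (s-1) ∉ pk ∧ s ∉ pk))).card = n - 2*k := by
    have htot := Finset.card_filter_add_card_filter_not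
      (s := Finset.Icc 1 (n+1)) (p := fun s => (s ≤ n ∧ (s-1) ∉ pk ∧ s ∉ pk))
    rw [hbad] at htot
    rw [Nat.card_Icc] at htot
    omega
  have h2k : 2*k ≤ n := two_lpk_le (v := v) (n := n)
  rw [hbad, hgood]
  push_cast [Nat.cast_sub h2k]
  ring
end slot3

section perm

variable {n : ℕ}

/-- insert the maximum value at position `p` -/
noncomputable def insPerm (π : Equiv.Perm (Fin n)) (p : Fin (n+1)) : Equiv.Perm (Fin (n+1)) :=
  Equiv.ofBijective (p.insertNth (Fin.last n) (fun i => (π i).castSucc)) <| by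
    rw [Fintype.bijective_iff_injective_and_card]
    refine ⟨?_, rfl⟩
    intro a b hab
    by_cases ha : a = p <;> by_cases hb : b = p
    · rw [ha, hb]
    · exfalso
      obtain ⟨b', hb'⟩ := Fin.exists_succAbove_eq hb
      rw [ha, Fin.insertNth_apply_same, ← hb', Fin.insertNth_apply_succAbove] at hab
      exact absurd hab.symm (Fin.ne_of_lt (Fin.castSucc_lt_last _))
    · exfalso
      obtain ⟨a', ha'⟩ := Fin.exists_succAbove_eq ha
      rw [hb, Fin.insertNth_apply_same, ← ha', Fin.insertNth_apply_succAbove] at hab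
      exact absurd hab (Fin.ne_of_lt (Fin.castSucc_lt_last _))
    · obtain ⟨a', ha'⟩ := Fin.exists_succAbove_eq ha
      obtain ⟨b', hb'⟩ := Fin.exists_succAbove_eq hb
      rw [← ha', ← hb', Fin.insertNth_apply_succAbove, Fin.insertNth_apply_succAbove] at hab
      have : a' = b' := π.injective (Fin.castSucc_injective _ hab)
      rw [← ha', ← hb', this]

lemma insPerm_apply (π : Equiv.Perm (Fin n)) (p : Fin (n+1)) (j : Fin (n+1)) :
    insPerm π p j = (p.insertNth (Fin.last n) (fun i => (π i).castSucc) : Fin (n+1) → Fin (n+1)) j := rfl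

lemma pval_le {π : Equiv.Perm (Fin n)} (j : ℕ) : pval π j ≤ n := by
  rw [pval]
  split
  · have := (π ⟨j-1, by omega⟩).isLt
    omega
  · omega

lemma pval_insPerm (π : Equiv.Perm (Fin n)) (p : Fin (n+1)) (j : ℕ) :
    pval (insPerm π p) j = wIns n (pval π) ((p:ℕ)+1) j := by
  rcases Nat.lt_trichotomy j ((p:ℕ)+1) with hlt | heq | hgt
  · rw [wIns_lt hlt]
    rcases Nat.eq_zero_or_pos j with h0 | hpos
    · subst h0
      rw [pval, pval, dif_neg (by omega), dif_neg (by omega)]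
    · -- 1 ≤ j ≤ p ≤ n
      have hjn : j ≤ n := by have := p.isLt; omega
      rw [pval, pval, dif_pos ⟨hpos, by omega⟩, dif_pos ⟨hpos, hjn⟩]
      have hcast : (⟨j-1, by omega⟩ : Fin (n+1)) =
          Fin.castSucc ⟨j-1, by omega⟩ := rfl
      rw [insPerm_apply, hcast]
      have hlt2 : Fin.castSucc (⟨j-1, by omega⟩ : Fin n) < p := by
        rw [Fin.lt_def]
        simp only [Fin.coe_castSucc]
        omega
      rw [← Fin.succAbove_of_castSucc_lt p _ hlt2, Fin.insertNth_apply_succAbove]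
      simp
  · -- j = p+1
    subst heq
    rw [wIns_self, pval, dif_pos ⟨by omega, by have := p.isLt; omega⟩]
    have hcast : (⟨(p:ℕ)+1-1, by have := p.isLt; omega⟩ : Fin (n+1)) = p := by
      apply Fin.ext
      simp
    rw [insPerm_apply, hcast, Fin.insertNth_apply_same]
    simp [Fin.last]
  · rw [wIns_gt hgt]
    rcases le_or_gt j (n+1) with hle | hgt2
    · -- p+1 < j ≤ n+1
      rw [pval, pval, dif_pos ⟨by omega, hle⟩, dif_pos ⟨by omega, by omega⟩]
      have hcast : (⟨j-1, by omega⟩ : Fin (n+1)) =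
          Fin.succ ⟨j-2, by omega⟩ := by
        apply Fin.ext
        simp only [Fin.succ_mk]
        omega
      rw [insPerm_apply, hcast]
      have hle2 : p ≤ Fin.castSucc (⟨j-2, by omega⟩ : Fin n) := by
        rw [Fin.le_def]
        simp only [Fin.coe_castSucc]
        omega
      rw [← Fin.succAbove_of_le_castSucc p _ hle2, Fin.insertNth_apply_succAbove]
      have : j - 1 - 1 = j - 2 := by omega
      simp [this]
    · rw [pval, pval, dif_neg (by omega), dif_neg (by omega)]

lemma insPerm_bijective :
    Function.Bijective (fun x : Equiv.Perm (Fin n) × Fin (n+1) => insPerm x.1 x.2) := by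
  rw [Fintype.bijective_iff_injective_and_card]
  constructor
  · rintro ⟨π, p⟩ ⟨π', p'⟩ h
    simp only [Prod.mk.injEq]
    have happ : ∀ j, insPerm π p j = insPerm π' p' j := fun j => DFunLike.congr_fun h j
    have hpp' : p = p' := by
      by_contra hne
      have h1 := happ p
      rw [insPerm_apply, insPerm_apply, Fin.insertNth_apply_same] at h1
      obtain ⟨i, hi⟩ := Fin.exists_succAbove_eq (show p ≠ p' from hne)
      rw [← hi, Fin.insertNth_apply_succAbove] at h1
      exact absurd h1.symm (Fin.ne_of_lt (Fin.castSucc_lt_last _))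
    subst hpp'
    refine ⟨?_, rfl⟩
    apply Equiv.ext
    intro i
    have h2 := happ (p.succAbove i)
    rw [insPerm_apply, insPerm_apply, Fin.insertNth_apply_succAbove,
      Fin.insertNth_apply_succAbove] at h2
    exact Fin.castSucc_injective _ h2
  · simp [Fintype.card_perm, Nat.factorial_succ]
    ring

end perm

lemma opL_one (m : ℕ) : opL 1 0 m = 2*(m:ℤ)+1 := by
  rw [opL, Finset.sum_range_succ, Finset.sum_range_succ, Finset.sum_range_zero]
  norm_num
  have e1 : zchoose ((1:ℤ) + (m:ℤ)) 1 = (m:ℤ) + 1 := by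
    rw [zchoose, if_pos (by constructor <;> omega)]
    have h1 : ((1:ℤ) + (m:ℤ)).toNat = m + 1 := by omega
    rw [h1]
    have h2 : ((1:ℤ)).toNat = 1 := rfl
    rw [h2, Nat.choose_one_right]
    push_cast
    ring
  have e2 : zchoose 1 0 = 1 := by rw [zchoose, if_pos (by constructor <;> omega)]; rfl
  have e3 : zchoose ((m:ℤ)) 1 = (m:ℤ) := by
    rcases Nat.eq_zero_or_pos m with h0 | hpos
    · subst h0; rw [zchoose, if_neg (by omega)]; rfl
    · rw [zchoose, if_pos (by constructor <;> omega)]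
      have h1 : ((m:ℤ)).toNat = m := by omega
      rw [h1]
      have h2 : ((1:ℤ)).toNat = 1 := rfl
      rw [h2, Nat.choose_one_right]
  have e4 : zchoose 1 1 = 1 := by rw [zchoose, if_pos (by constructor <;> omega)]; rfl
  rw [e1, e2, e3, e4]
  ring


theorem stmt13 (n m : ℕ) (hn : 1 ≤ n) :
    ∑ π : Equiv.Perm (Fin n), opL n (lpk π) m = (2 * (m : ℤ) + 1) ^ n := by
  induction n, hn using Nat.le_induction with
  | base =>
    have h1 : ∀ π : Equiv.Perm (Fin 1), lpk π = 0 := by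
      intro π
      rw [lpk]
      simp
    rw [Finset.sum_congr rfl (fun π _ => by rw [h1 π])]
    rw [Finset.sum_const]
    simp only [Finset.card_univ, Fintype.card_perm, Fintype.card_fin, Nat.factorial_one,
      one_smul, pow_one]
    exact opL_one m
  | succ n hn ih =>
    have hstep1 : ∑ σ : Equiv.Perm (Fin (n+1)), opL (n+1) (lpk σ) m
        = ∑ x : Equiv.Perm (Fin n) × Fin (n+1), opL (n+1) (lpk (insPerm x.1 x.2)) m :=
      (Fintype.sum_bijective _ insPerm_bijective _ _ (fun x => rfl)).symm
    rw [hstep1, Fintype.sum_prod_type]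
    have hπ : ∀ π : Equiv.Perm (Fin n),
        ∑ p : Fin (n+1), opL (n+1) (lpk (insPerm π p)) m
          = (2*((lpk π : ℤ))+1) * opL (n+1) (lpk π) m
            + ((n:ℤ) - 2*(lpk π : ℤ)) * opL (n+1) (lpk π + 1) m := by
      intro π
      have hvle : ∀ j, pval π j ≤ n := fun j => pval_le j
      have hlpk : ∀ p : Fin (n+1), lpk (insPerm π p)
          = (peaksW (wIns n (pval π) ((p:ℕ)+1)) (n+1)).card := by
        intro p
        rw [lpk_eq_peaksW, _root_.funext (pval_insPerm π p)]
      rw [Finset.sum_congr rfl (fun p _ => by rw [hlpk p])]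
      have himg : Finset.Icc 1 (n+1) = Finset.image (fun j => j+1) (Finset.range (n+1)) := by
        ext x
        simp only [Finset.mem_Icc, Finset.mem_image, Finset.mem_range]
        constructor
        · intro hx; exact ⟨x-1, by omega, by omega⟩
        · rintro ⟨j, hj, rfl⟩; omega
      have hsum := sum_slots hvle (fun k => opL (n+1) k m)
      rw [himg, Finset.sum_image (by intro a _ b _ h; simp only at h; omega)] at hsum
      rw [Fin.sum_univ_eq_sum_range
        (fun j => opL (n+1) ((peaksW (wIns n (pval π) (j+1)) (n+1)).card) m) (n+1)]
      rw [hsum, lpk_eq_peaksW]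
    rw [Finset.sum_congr rfl (fun π _ => hπ π)]
    have hstar : ∀ π : Equiv.Perm (Fin n),
        (2*((lpk π : ℤ))+1) * opL (n+1) (lpk π) m
          + ((n:ℤ) - 2*(lpk π : ℤ)) * opL (n+1) (lpk π + 1) m
        = (2*(m:ℤ)+1) * opL n (lpk π) m := by
      intro π
      apply opL_rec
      rw [lpk_eq_peaksW]
      exact two_lpk_le (v := pval π) (n := n)
    rw [Finset.sum_congr rfl (fun π _ => hstar π)]
    rw [← Finset.mul_sum, ih, pow_succ]
    ring
end

section
/- Σ_{π ∈ S_n} op*_π(m) = (2m)^n, where op*_π(m) = 2·4^{pk(π)}·Σ_{a≥0} C(n-1+m-a, n)·C(n-1-2pk(π), a-pk(π)). -/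
lemma zchoose_neg {a b : ℤ} (h : b < 0) : zchoose a b = 0 := by
  rw [zchoose, if_neg]; omega

lemma zchoose_big {a b : ℤ} (h : a < b) : zchoose a b = 0 := by
  rw [zchoose, if_neg]; omega

lemma zchoose_zero (a : ℤ) (h : 0 ≤ a) : zchoose a 0 = 1 := by
  rw [zchoose, if_pos ⟨le_refl 0, h⟩]; simp

lemma zchoose_in {a b : ℤ} (h0 : 0 ≤ b) (h1 : b ≤ a) :
    zchoose a b = ((a.toNat).choose b.toNat : ℤ) := by
  rw [zchoose, if_pos ⟨h0, h1⟩]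

lemma zchoose_pascal (a b : ℤ) (ha : 0 ≤ a) :
    zchoose (a + 1) b = zchoose a b + zchoose a (b - 1) := by
  rcases lt_trichotomy b 0 with hb | hb | hb
  · rw [zchoose_neg hb, zchoose_neg hb, zchoose_neg (show b - 1 < 0 by omega)]; ring
  · subst hb
    rw [zchoose_zero _ (by omega), zchoose_zero _ ha,
      zchoose_neg (show (0:ℤ) - 1 < 0 by norm_num)]
    ring
  · rcases le_or_gt b a with h1 | h1
    · rw [zchoose_in (by omega) (by omega), zchoose_in (by omega) h1,
        zchoose_in (by omega) (by omega)]
      have e1 : (a + 1).toNat = a.toNat + 1 := by omega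
      have e2 : b.toNat = (b - 1).toNat + 1 := by omega
      rw [e1, e2, Nat.choose_succ_succ']
      push_cast; ring
    · rcases eq_or_lt_of_le (show a + 1 ≤ b by omega) with h2 | h2
      · rw [← h2, zchoose_in (by omega) (le_refl _), zchoose_big (by omega),
          zchoose_in (by omega) (by omega)]
        simp
      · rw [zchoose_big (by omega), zchoose_big h1, zchoose_big (by omega)]; ring

lemma zchoose_absorb1 (a b : ℤ) (ha : 0 ≤ a) :
    b * zchoose a b = a * zchoose (a - 1) (b - 1) := by
  rcases lt_trichotomy b 0 with hb | hb | hb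
  · rw [zchoose_neg hb, zchoose_neg (show b - 1 < 0 by omega)]; ring
  · subst hb
    rw [zchoose_neg (show (0:ℤ) - 1 < 0 by norm_num)]; ring
  · rcases le_or_gt b a with h1 | h1
    · rw [zchoose_in (by omega) h1, zchoose_in (by omega) (by omega)]
      have key := Nat.add_one_mul_choose_eq (a.toNat - 1) (b.toNat - 1)
      have e1 : (a.toNat - 1).succ = a.toNat := by omega
      have e2 : (b.toNat - 1).succ = b.toNat := by omega
      rw [Nat.succ_eq_add_one] at e1 e2
      rw [e1, e2] at key
      have e3 : (a-1).toNat = a.toNat - 1 := by omega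
      have e4 : (b-1).toNat = b.toNat - 1 := by omega
      rw [e3, e4]
      have key2 : (a.toNat : ℤ) * ((a.toNat - 1).choose (b.toNat - 1) : ℤ)
          = (a.toNat.choose b.toNat : ℤ) * b.toNat := by exact_mod_cast congrArg Nat.cast key
      have ea : (a.toNat : ℤ) = a := by omega
      have eb : (b.toNat : ℤ) = b := by omega
      rw [ea, eb] at key2; linarith
    · rw [zchoose_big h1, zchoose_big (by omega)]; ring

lemma zchoose_absorb0 (a b : ℤ) (ha : 0 ≤ a) :
    b * zchoose a b = (a - b + 1) * zchoose a (b - 1) := by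
  rcases lt_trichotomy b 0 with hb | hb | hb
  · rw [zchoose_neg hb, zchoose_neg (show b - 1 < 0 by omega)]; ring
  · subst hb
    rw [zchoose_neg (show (0:ℤ) - 1 < 0 by norm_num)]; ring
  · rcases le_or_gt b a with h1 | h1
    · rw [zchoose_in (by omega) h1, zchoose_in (by omega) (by omega)]
      have key := Nat.choose_succ_right_eq a.toNat (b.toNat - 1)
      have e2 : b.toNat - 1 + 1 = b.toNat := by omega
      rw [e2] at key
      have e4 : (b-1).toNat = b.toNat - 1 := by omega
      rw [e4]
      have key2 : (a.toNat.choose b.toNat : ℤ) * b.toNat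
          = (a.toNat.choose (b.toNat - 1) : ℤ) * ((a.toNat - (b.toNat - 1) : ℕ) : ℤ) := by
        exact_mod_cast congrArg Nat.cast key
      have ea : ((a.toNat - (b.toNat - 1) : ℕ) : ℤ) = a - b + 1 := by omega
      have eb : (b.toNat : ℤ) = b := by omega
      rw [ea, eb] at key2; linarith
    · rcases eq_or_lt_of_le (show a + 1 ≤ b by omega) with h2 | h2
      · rw [zchoose_big (by omega)]
        have : a - b + 1 = 0 := by omega
        rw [this]; ring
      · rw [zchoose_big h1, zchoose_big (by omega)]; ring

lemma zchoose_absorb2 (a b : ℤ) (ha : 0 ≤ a) :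
    (a - b + 1) * zchoose a (b - 1) = a * zchoose (a - 1) (b - 1) := by
  rw [← zchoose_absorb0 a b ha, zchoose_absorb1 a b ha]

lemma zchoose_absorb3 (x : ℤ) (n : ℕ) (hx : 0 ≤ x) :
    ((n : ℤ) + 1) * zchoose x ((n : ℤ) + 1) = (x - n) * zchoose x n := by
  rcases le_or_gt ((n : ℤ) + 1) x with h1 | h1
  · rw [zchoose_in (by omega) h1, zchoose_in (by omega) (by omega)]
    have key := Nat.choose_succ_right_eq x.toNat n
    have e1 : ((n:ℤ)+1).toNat = n + 1 := by omega
    have e2 : ((n:ℤ)).toNat = n := by omega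
    rw [e1, e2]
    have key2 : (x.toNat.choose (n+1) : ℤ) * ((n:ℤ)+1)
        = (x.toNat.choose n : ℤ) * ((x.toNat - n : ℕ) : ℤ) := by
      exact_mod_cast congrArg Nat.cast key
    rcases le_or_gt (n:ℤ) x with h3 | h3
    · have e3 : ((x.toNat - (n:ℕ) : ℕ) : ℤ) = x - n := by omega
      rw [e3] at key2; linarith
    · omega
  · rw [zchoose_big h1]
    rcases lt_trichotomy x (n:ℤ) with h2 | h2 | h2
    · rw [zchoose_big h2]; ring
    · rw [h2]; ring
    · omega

lemma star_lemma (k : ℕ) (a b : ℤ) (ha : 0 ≤ a) :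
    (2*(k:ℤ)+2) * zchoose (a+1) b + 4*a*zchoose (a-1) (b-1)
      = 2*(b+k+1)*zchoose a b + 2*(a+k+2-b)*zchoose a (b-1) := by
  have h1 := zchoose_absorb1 a b ha
  have h2 := zchoose_absorb2 a b ha
  have hp := zchoose_pascal a b ha
  linear_combination (2*(k:ℤ)+2) * hp - 2*h1 - 2*h2

lemma worp_step (x dz : ℤ) (n : ℕ) (hx : 0 ≤ x) :
    (dz+1) * zchoose (x+1) ((n:ℤ)+1) + ((n:ℤ)-dz) * zchoose x ((n:ℤ)+1)
      = (x+1+dz-n) * zchoose x n := by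
  have hp := zchoose_pascal x ((n:ℤ)+1) hx
  have e : (n:ℤ) + 1 - 1 = n := by ring
  rw [e] at hp
  have h3 := zchoose_absorb3 x n hx
  linear_combination (dz+1) * hp + h3

/-! ### descent / peak counting on functions -/

def desF (n : ℕ) (w : ℕ → ℕ) : ℕ :=
  ((Finset.Icc 1 (n - 1)).filter fun i => w (i + 1) < w i).card

def pkF (n : ℕ) (w : ℕ → ℕ) : ℕ :=
  ((Finset.Icc 2 (n - 1)).filter fun i => w (i - 1) < w i ∧ w (i + 1) < w i).card

def insF (p B : ℕ) (w : ℕ → ℕ) : ℕ → ℕ :=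
  fun j => if j = p + 1 then B else if j ≤ p then w j else w (j - 1)

lemma insF_low {p B : ℕ} {w : ℕ → ℕ} {j : ℕ} (h : j ≤ p) : insF p B w j = w j := by
  unfold insF; rw [if_neg (by omega), if_pos h]

lemma insF_at {p B : ℕ} {w : ℕ → ℕ} : insF p B w (p+1) = B := by
  unfold insF; rw [if_pos rfl]

lemma insF_high {p B : ℕ} {w : ℕ → ℕ} {j : ℕ} (h : p + 2 ≤ j) : insF p B w j = w (j-1) := by
  unfold insF; rw [if_neg (by omega), if_neg (by omega)]

lemma Icc_succ_ins (a n : ℕ) (h : a ≤ n) : Finset.Icc a n = insert n (Finset.Icc a (n-1)) := by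
  ext x; simp only [Finset.mem_Icc, Finset.mem_insert]; omega

lemma desF_succ (n : ℕ) (hn : 1 ≤ n) (w : ℕ → ℕ) :
    desF (n+1) w = desF n w + (if w (n+1) < w n then 1 else 0) := by
  unfold desF
  rw [show n + 1 - 1 = n from rfl, Icc_succ_ins 1 n hn, Finset.filter_insert]
  by_cases hD : w (n+1) < w n
  · rw [if_pos hD, if_pos hD, Finset.card_insert_of_notMem (by
      intro hmem
      have := Finset.mem_of_mem_filter n hmem
      simp only [Finset.mem_Icc] at this; omega)]
  · rw [if_neg hD, if_neg hD, add_zero]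

lemma pkF_succ (n : ℕ) (hn : 1 ≤ n) (w : ℕ → ℕ) :
    pkF (n+1) w = pkF n w + (if 2 ≤ n ∧ w (n-1) < w n ∧ w (n+1) < w n then 1 else 0) := by
  rcases Nat.lt_or_ge n 2 with h2 | h2
  · have : n = 1 := by omega
    subst this
    rw [if_neg (by omega)]
    unfold pkF
    rw [show Finset.Icc 2 (2-1) = ∅ from Finset.Icc_eq_empty (by omega),
        show Finset.Icc 2 (1-1) = ∅ from Finset.Icc_eq_empty (by omega)]
    simp
  · unfold pkF
    rw [show n + 1 - 1 = n from rfl, Icc_succ_ins 2 n h2, Finset.filter_insert]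
    by_cases hD : w (n-1) < w n ∧ w (n+1) < w n
    · rw [if_pos hD, if_pos ⟨h2, hD⟩, Finset.card_insert_of_notMem (by
        intro hmem
        have := Finset.mem_of_mem_filter n hmem
        simp only [Finset.mem_Icc] at this; omega)]
    · rw [if_neg hD, if_neg (by tauto), add_zero]

lemma desF_congr {n : ℕ} {w w' : ℕ → ℕ} (h : ∀ j, 1 ≤ j → j ≤ n → w j = w' j) :
    desF n w = desF n w' := by
  unfold desF
  congr 1
  apply Finset.filter_congr
  intro i hi
  simp only [Finset.mem_Icc] at hi
  have h1 : w (i+1) = w' (i+1) := h _ (by omega) (by omega)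
  have h2 : w i = w' i := h _ (by omega) (by omega)
  rw [h1, h2]

lemma pkF_congr {n : ℕ} {w w' : ℕ → ℕ} (h : ∀ j, 1 ≤ j → j ≤ n → w j = w' j) :
    pkF n w = pkF n w' := by
  unfold pkF
  congr 1
  apply Finset.filter_congr
  intro i hi
  simp only [Finset.mem_Icc] at hi
  rw [h (i-1) (by omega) (by omega), h i (by omega) (by omega), h (i+1) (by omega) (by omega)]

lemma desF_ins (w : ℕ → ℕ) (B : ℕ) (hw : ∀ j, w j < B) :
    ∀ n p, p ≤ n → desF (n+1) (insF p B w)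
      = desF n w + (if p = n ∨ (1 ≤ p ∧ p + 1 ≤ n ∧ w (p+1) < w p) then 0 else 1) := by
  intro n
  induction n with
  | zero =>
    intro p hp
    have : p = 0 := by omega
    subst this
    rw [if_pos (Or.inl rfl)]
    unfold desF
    simp
  | succ n ih =>
    intro p hp
    set v := insF p B w with hv
    rw [desF_succ (n+1) (by omega) v]
    by_cases hpn : p = n + 1
    · subst hpn
      have e1 : v (n+2) = B := insF_at
      have e2 : v (n+1) = w (n+1) := insF_low (by omega)
      rw [e1, e2, if_neg (by have := hw (n+1); omega), if_pos (Or.inl rfl),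
        desF_congr (fun j h1 h2 => insF_low (by omega))]
    · have hp' : p ≤ n := by omega
      by_cases hpn2 : p = n
      · subst hpn2
        have e1 : v (p+2) = w (p+1) := insF_high (by omega)
        have e2 : v (p+1) = B := insF_at
        rw [e1, e2, if_pos (hw (p+1)), ih p (le_refl p), if_pos (Or.inl rfl)]
        rcases Nat.eq_zero_or_pos p with h0 | h0
        · subst h0
          rw [if_neg (by omega)]
          unfold desF; simp
        · rw [desF_succ p (by omega) w]
          by_cases hD : w (p+1) < w p
          · rw [if_pos hD, if_pos (Or.inr ⟨by omega, by omega, hD⟩)]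
          · rw [if_neg hD, if_neg (by
              rintro (h | h) <;> omega)]
      · -- p < n
        have e1 : v (n+2) = w (n+1) := insF_high (by omega)
        have e2 : v (n+1) = w n := insF_high (by omega)
        rw [e1, e2, ih p hp', desF_succ n (by omega) w]
        have econd : (p = n ∨ (1 ≤ p ∧ p + 1 ≤ n ∧ w (p+1) < w p))
            ↔ (p = n + 1 ∨ (1 ≤ p ∧ p + 1 ≤ n + 1 ∧ w (p+1) < w p)) := by
          constructor
          · rintro (h | ⟨h1, h2, h3⟩); · omega
            · exact Or.inr ⟨h1, by omega, h3⟩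
          · rintro (h | ⟨h1, h2, h3⟩); · omega
            · exact Or.inr ⟨h1, by omega, h3⟩
        by_cases hc : p = n ∨ (1 ≤ p ∧ p + 1 ≤ n ∧ w (p+1) < w p)
        · rw [if_pos hc, if_pos (econd.mp hc)]; ring
        · rw [if_neg hc, if_neg (fun h => hc (econd.mpr h))]; ring

lemma pkF_one (u : ℕ → ℕ) : pkF 1 u = 0 := by
  unfold pkF
  rw [show Finset.Icc 2 (1-1) = ∅ from Finset.Icc_eq_empty (by omega)]
  simp

lemma pkF_zero (u : ℕ → ℕ) : pkF 0 u = 0 := by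
  unfold pkF
  rw [show Finset.Icc 2 (0-1) = ∅ from Finset.Icc_eq_empty (by omega)]
  simp

lemma pkF_ins (w : ℕ → ℕ) (B : ℕ) (hw : ∀ j, w j < B) :
    ∀ n p, p ≤ n → pkF (n+1) (insF p B w) = pkF n w +
      (if p = 0 ∨ p = n ∨ (2 ≤ p ∧ p+1 ≤ n ∧ w (p-1) < w p ∧ w (p+1) < w p)
          ∨ (1 ≤ p ∧ p+2 ≤ n ∧ w p < w (p+1) ∧ w (p+2) < w (p+1)) then 0 else 1) := by
  intro n
  induction n with
  | zero =>
    intro p hp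
    have : p = 0 := by omega
    subst this
    rw [if_pos (Or.inl rfl), pkF_one, pkF_zero]
  | succ n ih =>
    intro p hp
    set v := insF p B w with hv
    rw [pkF_succ (n+1) (by omega) v]
    simp only [Nat.add_sub_cancel, show n+1+1 = n+2 from by omega]
    by_cases hpn : p = n + 1
    · subst hpn
      have e2 : v (n+2) = B := insF_at
      have e1 : v (n+1) = w (n+1) := insF_low (by omega)
      have e0 : v n = w n := insF_low (by omega)
      rw [pkF_congr (n := n+1) (w' := w) (fun j h1 h2 => insF_low (by omega))]
      simp only [e0, e1, e2]
      have hB := hw (n+1)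
      split_ifs <;> first | omega | simp_all
    · by_cases hpn2 : p = n
      · subst hpn2
        rcases Nat.eq_zero_or_pos p with h0 | h0
        · subst h0
          rw [pkF_one, pkF_one]
          have e1 : v 1 = B := insF_at
          have e2 : v 2 = w 1 := insF_high (by omega)
          simp only [e1, e2]
          split_ifs <;> first | omega | simp_all
        · have e0 : v p = w p := insF_low (le_refl p)
          have e1 : v (p+1) = B := insF_at
          have e2 : v (p+2) = w (p+1) := insF_high (by omega)
          have em : v (p-1) = w (p-1) := insF_low (by omega)
          rw [pkF_succ p h0 v,
            pkF_congr (n := p) (w' := w) (fun j h1 h2 => insF_low (by omega)),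
            pkF_succ p h0 w]
          simp only [e0, e1, e2, em]
          have hB1 := hw p
          have hB2 := hw (p+1)
          split_ifs <;> first | omega | simp_all
      · -- p < n
        have hplt : p < n := by omega
        have e3 : v (n+2) = w (n+1) := insF_high (by omega)
        have e2 : v (n+1) = w n := insF_high (by omega)
        by_cases hpe : n = p + 1
        · subst hpe
          have e1 : v (p+1) = B := insF_at
          have e2' : v (p+2) = w (p+1) := insF_high (by omega)
          have e3' : v (p+3) = w (p+2) := insF_high (by omega)
          rw [ih p (by omega), pkF_succ (p+1) (by omega) w]
          simp only [show p+1+1 = p+2 from by omega, show p+1+2 = p+3 from by omega,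
            Nat.add_sub_cancel, e1, e2', e3']
          have hB1 := hw (p+1)
          split_ifs <;> first | omega | simp_all
        · have hpd : p + 2 ≤ n := by omega
          have e1 : v n = w (n-1) := insF_high (by omega)
          rw [ih p (by omega), pkF_succ n (by omega) w]
          simp only [e1, e2, e3]
          split_ifs <;> first | omega | simp_all

lemma desF_le (n : ℕ) (w : ℕ → ℕ) : desF n w ≤ n - 1 := by
  unfold desF
  calc ((Finset.Icc 1 (n-1)).filter _).card ≤ (Finset.Icc 1 (n-1)).card :=
        Finset.card_filter_le _ _
    _ = n - 1 := by rw [Nat.card_Icc]; omega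

lemma cntDes (n : ℕ) (w : ℕ → ℕ) :
    ((Finset.range (n+1)).filter fun p => p = n ∨ (1 ≤ p ∧ p+1 ≤ n ∧ w (p+1) < w p)).card
      = desF n w + 1 := by
  classical
  have hS : ((Finset.range (n+1)).filter fun p => p = n ∨ (1 ≤ p ∧ p+1 ≤ n ∧ w (p+1) < w p))
      = insert n ((Finset.Icc 1 (n-1)).filter fun i => w (i+1) < w i) := by
    ext x
    simp only [Finset.mem_filter, Finset.mem_range, Finset.mem_insert, Finset.mem_Icc]
    omega
  rw [hS, Finset.card_insert_of_notMem (by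
    intro hmem
    have := Finset.mem_of_mem_filter n hmem
    simp only [Finset.mem_Icc] at this
    omega)]
  rfl

lemma cntPk (n : ℕ) (hn : 1 ≤ n) (w : ℕ → ℕ) :
    ((Finset.range (n+1)).filter fun p => p = 0 ∨ p = n
      ∨ (2 ≤ p ∧ p+1 ≤ n ∧ w (p-1) < w p ∧ w (p+1) < w p)
      ∨ (1 ≤ p ∧ p+2 ≤ n ∧ w p < w (p+1) ∧ w (p+2) < w (p+1))).card
    = 2 * pkF n w + 2 := by
  classical
  set P := (Finset.Icc 2 (n-1)).filter (fun i => w (i-1) < w i ∧ w (i+1) < w i) with hP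
  have hmemP : ∀ q, q ∈ P ↔ (2 ≤ q ∧ q+1 ≤ n ∧ w (q-1) < w q ∧ w (q+1) < w q) := by
    intro q
    rw [hP]
    simp only [Finset.mem_filter, Finset.mem_Icc]
    omega
  have hmemQ : ∀ p, p ∈ P.image (· - 1)
      ↔ (1 ≤ p ∧ p+2 ≤ n ∧ w p < w (p+1) ∧ w (p+2) < w (p+1)) := by
    intro p
    simp only [Finset.mem_image]
    constructor
    · rintro ⟨q, hq, rfl⟩
      rw [hmemP] at hq
      obtain ⟨h2, h3, h4, h5⟩ := hq
      refine ⟨by omega, by omega, ?_, ?_⟩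
      · rw [show q - 1 + 1 = q from by omega]; exact h4
      · rw [show q - 1 + 2 = q + 1 from by omega, show q - 1 + 1 = q from by omega]; exact h5
    · rintro ⟨h1, h2, h3, h4⟩
      refine ⟨p+1, (hmemP _).mpr ⟨by omega, by omega, ?_, ?_⟩, by omega⟩
      · exact h3
      · exact h4
  have hS : ((Finset.range (n+1)).filter fun p => p = 0 ∨ p = n
      ∨ (2 ≤ p ∧ p+1 ≤ n ∧ w (p-1) < w p ∧ w (p+1) < w p)
      ∨ (1 ≤ p ∧ p+2 ≤ n ∧ w p < w (p+1) ∧ w (p+2) < w (p+1)))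
      = insert 0 (insert n (P ∪ P.image (· - 1))) := by
    ext x
    simp only [Finset.mem_filter, Finset.mem_range, Finset.mem_insert, Finset.mem_union,
      hmemP, hmemQ]
    omega
  have hcP : P.card = pkF n w := rfl
  have hcQ : (P.image (· - 1)).card = pkF n w := by
    rw [Finset.card_image_of_injOn, hcP]
    intro a ha b hb hab
    simp only [Finset.mem_coe, hmemP] at ha hb
    simp only [] at hab
    omega
  have hdisj : Disjoint P (P.image (· - 1)) := by
    rw [Finset.disjoint_left]
    intro a ha ha'
    rw [hmemP] at ha
    rw [hmemQ] at ha'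
    omega
  rw [hS, Finset.card_insert_of_notMem (by
      simp only [Finset.mem_insert, Finset.mem_union, hmemP, hmemQ]
      omega),
    Finset.card_insert_of_notMem (by
      simp only [Finset.mem_union, hmemP, hmemQ]
      omega),
    Finset.card_union_of_disjoint hdisj, hcP, hcQ]
  omega

lemma pkF_bound (n : ℕ) (hn : 1 ≤ n) (w : ℕ → ℕ) : 2 * pkF n w + 2 ≤ n + 1 := by
  rw [← cntPk n hn w]
  calc _ ≤ (Finset.range (n+1)).card := Finset.card_filter_le _ _
    _ = n + 1 := Finset.card_range _

open Equiv in
noncomputable def insP {n : ℕ} (σ : Equiv.Perm (Fin n)) (p : Fin (n+1)) :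
    Equiv.Perm (Fin (n+1)) :=
  Equiv.ofBijective (p.insertNth (Fin.last n) (fun i => (σ i).castSucc))
    (Finite.injective_iff_bijective.mp (by
      intro a b hab
      by_cases ha : a = p
      · by_cases hb : b = p
        · rw [ha, hb]
        · exfalso
          obtain ⟨j, hj⟩ := Fin.exists_succAbove_eq hb
          rw [ha, Fin.insertNth_apply_same, ← hj, Fin.insertNth_apply_succAbove] at hab
          exact (Fin.castSucc_lt_last (σ j)).ne' hab
      · by_cases hb : b = p
        · exfalso
          obtain ⟨j, hj⟩ := Fin.exists_succAbove_eq ha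
          rw [hb, Fin.insertNth_apply_same, ← hj, Fin.insertNth_apply_succAbove] at hab
          exact (Fin.castSucc_lt_last (σ j)).ne hab
        · obtain ⟨i, hi⟩ := Fin.exists_succAbove_eq ha
          obtain ⟨j, hj⟩ := Fin.exists_succAbove_eq hb
          rw [← hi, ← hj, Fin.insertNth_apply_succAbove, Fin.insertNth_apply_succAbove] at hab
          rw [← hi, ← hj, σ.injective (Fin.castSucc_inj.mp hab)]))

lemma insP_apply_same {n : ℕ} (σ : Equiv.Perm (Fin n)) (p : Fin (n+1)) :
    insP σ p p = Fin.last n := by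
  simp [insP, Equiv.ofBijective_apply, Fin.insertNth_apply_same]

lemma insP_apply_succAbove {n : ℕ} (σ : Equiv.Perm (Fin n)) (p : Fin (n+1)) (i : Fin n) :
    insP σ p (p.succAbove i) = (σ i).castSucc := by
  simp [insP, Equiv.ofBijective_apply, Fin.insertNth_apply_succAbove]

lemma pval_lt {n : ℕ} (σ : Equiv.Perm (Fin n)) (j : ℕ) : pval σ j < n + 1 := by
  unfold pval
  split
  · have := (σ ⟨j-1, by omega⟩).isLt
    omega
  · omega

lemma pval_insP {n : ℕ} (σ : Equiv.Perm (Fin n)) (p : Fin (n+1)) (j : ℕ) :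
    pval (insP σ p) j = insF (p : ℕ) (n+1) (pval σ) j := by
  have hple : (p : ℕ) ≤ n := by omega
  by_cases hj : 1 ≤ j ∧ j ≤ n + 1
  · rcases lt_trichotomy (j - 1) (p : ℕ) with hlt | heq | hgt
    · -- j ≤ p : value is σ at same spot
      have hjn : j ≤ n := by omega
      have hidx : (⟨j-1, by omega⟩ : Fin (n+1)) = p.succAbove ⟨j-1, by omega⟩ := by
        rw [Fin.succAbove_of_castSucc_lt]
        · rfl
        · simpa [Fin.lt_def] using hlt
      rw [show insF (p : ℕ) (n+1) (pval σ) j = pval σ j from by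
        unfold insF; rw [if_neg (by omega), if_pos (by omega)]]
      unfold pval
      rw [dif_pos hj, dif_pos ⟨hj.1, hjn⟩]
      rw [hidx, insP_apply_succAbove]
      simp
    · -- j = p + 1 : value is last
      have hidx : (⟨j-1, by omega⟩ : Fin (n+1)) = p := by
        apply Fin.ext; simp [heq]
      rw [show insF (p : ℕ) (n+1) (pval σ) j = n + 1 from by
        unfold insF; rw [if_pos (by omega)]]
      unfold pval
      rw [dif_pos hj, hidx, insP_apply_same]
      simp
    · -- j ≥ p + 2
      have hidx : (⟨j-1, by omega⟩ : Fin (n+1)) = p.succAbove ⟨j-2, by omega⟩ := by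
        rw [Fin.succAbove_of_le_castSucc]
        · apply Fin.ext; simp [Fin.val_succ]; omega
        · simp [Fin.le_def]; omega
      rw [show insF (p : ℕ) (n+1) (pval σ) j = pval σ (j-1) from by
        unfold insF; rw [if_neg (by omega), if_neg (by omega)]]
      unfold pval
      rw [dif_pos hj, dif_pos (by omega)]
      rw [hidx, insP_apply_succAbove]
      simp [show j - 1 - 1 = j - 2 from by omega]
  · -- out of range
    rw [show pval (insP σ p) j = 0 from by unfold pval; rw [dif_neg hj]]
    rcases Nat.eq_zero_or_pos j with h0 | h1
    · subst h0
      rw [show insF (p : ℕ) (n+1) (pval σ) 0 = pval σ 0 from by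
        unfold insF; rw [if_neg (by omega), if_pos (by omega)]]
      unfold pval; rw [dif_neg (by omega)]
    · have hbig : n + 2 ≤ j := by omega
      rw [show insF (p : ℕ) (n+1) (pval σ) j = pval σ (j-1) from by
        unfold insF; rw [if_neg (by omega), if_neg (by omega)]]
      unfold pval; rw [dif_neg (by omega)]

lemma sum_insP {n : ℕ} (H : Equiv.Perm (Fin (n+1)) → ℤ) :
    ∑ π : Equiv.Perm (Fin (n+1)), H π
      = ∑ σ : Equiv.Perm (Fin n), ∑ p : Fin (n+1), H (insP σ p) := by
  classical
  have hbij : Function.Bijective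
      (fun z : Equiv.Perm (Fin n) × Fin (n+1) => insP z.1 z.2) := by
    rw [Fintype.bijective_iff_injective_and_card]
    constructor
    · rintro ⟨σ, p⟩ ⟨σ', p'⟩ h
      simp only at h
      have hpp : p = p' := by
        apply (insP σ' p').injective
        rw [insP_apply_same, ← h, insP_apply_same]
      subst hpp
      have hσ : σ = σ' := by
        apply Equiv.ext
        intro i
        have h1 : insP σ p (p.succAbove i) = insP σ' p (p.succAbove i) := by rw [h]
        rw [insP_apply_succAbove, insP_apply_succAbove] at h1
        exact Fin.castSucc_inj.mp h1
      rw [hσ]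
    · simp [Fintype.card_perm, Fintype.card_prod, Nat.factorial_succ, mul_comm]
  calc ∑ π : Equiv.Perm (Fin (n+1)), H π
      = ∑ z : Equiv.Perm (Fin n) × Fin (n+1), H (insP z.1 z.2) :=
        (Fintype.sum_bijective _ hbij _ _ (fun z => rfl)).symm
    _ = ∑ σ : Equiv.Perm (Fin n), ∑ p : Fin (n+1), H (insP σ p) := by
        rw [Fintype.sum_prod_type]

lemma recA (n : ℕ) (G : ℕ → ℤ) :
    ∑ π : Equiv.Perm (Fin (n+1)), G (des π)
      = ∑ σ : Equiv.Perm (Fin n),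
          (((des σ : ℤ) + 1) * G (des σ) + ((n : ℤ) - des σ) * G (des σ + 1)) := by
  classical
  rw [sum_insP (fun π => G (des π))]
  refine Finset.sum_congr rfl fun σ _ => ?_
  have hw : ∀ j, pval σ j < n + 1 := pval_lt σ
  have hins : ∀ p : Fin (n+1), des (insP σ p) = des σ +
      (if (p:ℕ) = n ∨ (1 ≤ (p:ℕ) ∧ (p:ℕ)+1 ≤ n ∧ pval σ ((p:ℕ)+1) < pval σ (p:ℕ))
        then 0 else 1) := by
    intro p
    have h1 : pval (insP σ p) = insF (p:ℕ) (n+1) (pval σ) := funext (pval_insP σ p)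
    show desF (n+1) (pval (insP σ p)) = _
    rw [h1]
    exact desF_ins (pval σ) (n+1) hw n (p:ℕ) (by omega)
  have step1 : ∑ p : Fin (n+1), G (des (insP σ p))
      = ∑ p ∈ Finset.range (n+1),
          (if p = n ∨ (1 ≤ p ∧ p+1 ≤ n ∧ pval σ (p+1) < pval σ p)
            then G (des σ) else G (des σ + 1)) := by
    rw [← Fin.sum_univ_eq_sum_range]
    refine Finset.sum_congr rfl fun p _ => ?_
    rw [hins p]
    by_cases hc : (p:ℕ) = n ∨ (1 ≤ (p:ℕ) ∧ (p:ℕ)+1 ≤ n ∧ pval σ ((p:ℕ)+1) < pval σ (p:ℕ))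
    · rw [if_pos hc, if_pos hc, add_zero]
    · rw [if_neg hc, if_neg hc]
  rw [step1, Finset.sum_ite, Finset.sum_const, Finset.sum_const, cntDes n (pval σ)]
  have hd : desF n (pval σ) ≤ n - 1 := desF_le n _
  have hneg : ((Finset.range (n+1)).filter
      (fun p => ¬(p = n ∨ (1 ≤ p ∧ p+1 ≤ n ∧ pval σ (p+1) < pval σ p)))).card
      = n - desF n (pval σ) := by
    have h2 := Finset.card_filter_add_card_filter_not
      (s := Finset.range (n+1))
      (p := fun p => p = n ∨ (1 ≤ p ∧ p+1 ≤ n ∧ pval σ (p+1) < pval σ p))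
    rw [cntDes n (pval σ), Finset.card_range] at h2
    omega
  rw [hneg]
  simp only [nsmul_eq_mul]
  have e0 : des σ = desF n (pval σ) := rfl
  have e1 : ((n - desF n (pval σ) : ℕ) : ℤ) = (n : ℤ) - desF n (pval σ) := by omega
  rw [e0, e1]
  push_cast
  ring

lemma recW (n : ℕ) (hn : 1 ≤ n) (G : ℕ → ℤ) :
    ∑ π : Equiv.Perm (Fin (n+1)), G (pk π)
      = ∑ σ : Equiv.Perm (Fin n),
          ((2*(pk σ : ℤ) + 2) * G (pk σ) + ((n : ℤ) - 1 - 2*(pk σ)) * G (pk σ + 1)) := by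
  classical
  rw [sum_insP (fun π => G (pk π))]
  refine Finset.sum_congr rfl fun σ _ => ?_
  have hw : ∀ j, pval σ j < n + 1 := pval_lt σ
  have hins : ∀ p : Fin (n+1), pk (insP σ p) = pk σ +
      (if (p:ℕ) = 0 ∨ (p:ℕ) = n
        ∨ (2 ≤ (p:ℕ) ∧ (p:ℕ)+1 ≤ n ∧ pval σ ((p:ℕ)-1) < pval σ (p:ℕ) ∧ pval σ ((p:ℕ)+1) < pval σ (p:ℕ))
        ∨ (1 ≤ (p:ℕ) ∧ (p:ℕ)+2 ≤ n ∧ pval σ (p:ℕ) < pval σ ((p:ℕ)+1) ∧ pval σ ((p:ℕ)+2) < pval σ ((p:ℕ)+1))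
        then 0 else 1) := by
    intro p
    have h1 : pval (insP σ p) = insF (p:ℕ) (n+1) (pval σ) := funext (pval_insP σ p)
    show pkF (n+1) (pval (insP σ p)) = _
    rw [h1]
    exact pkF_ins (pval σ) (n+1) hw n (p:ℕ) (by omega)
  have step1 : ∑ p : Fin (n+1), G (pk (insP σ p))
      = ∑ p ∈ Finset.range (n+1),
          (if p = 0 ∨ p = n
            ∨ (2 ≤ p ∧ p+1 ≤ n ∧ pval σ (p-1) < pval σ p ∧ pval σ (p+1) < pval σ p)
            ∨ (1 ≤ p ∧ p+2 ≤ n ∧ pval σ p < pval σ (p+1) ∧ pval σ (p+2) < pval σ (p+1))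
            then G (pk σ) else G (pk σ + 1)) := by
    rw [← Fin.sum_univ_eq_sum_range]
    refine Finset.sum_congr rfl fun p _ => ?_
    rw [hins p]
    by_cases hc : (p:ℕ) = 0 ∨ (p:ℕ) = n
        ∨ (2 ≤ (p:ℕ) ∧ (p:ℕ)+1 ≤ n ∧ pval σ ((p:ℕ)-1) < pval σ (p:ℕ) ∧ pval σ ((p:ℕ)+1) < pval σ (p:ℕ))
        ∨ (1 ≤ (p:ℕ) ∧ (p:ℕ)+2 ≤ n ∧ pval σ (p:ℕ) < pval σ ((p:ℕ)+1) ∧ pval σ ((p:ℕ)+2) < pval σ ((p:ℕ)+1))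
    · rw [if_pos hc, if_pos hc, add_zero]
    · rw [if_neg hc, if_neg hc]
  rw [step1, Finset.sum_ite, Finset.sum_const, Finset.sum_const, cntPk n hn (pval σ)]
  have hb : 2 * pkF n (pval σ) + 2 ≤ n + 1 := pkF_bound n hn (pval σ)
  have hneg : ((Finset.range (n+1)).filter
      (fun p => ¬(p = 0 ∨ p = n
        ∨ (2 ≤ p ∧ p+1 ≤ n ∧ pval σ (p-1) < pval σ p ∧ pval σ (p+1) < pval σ p)
        ∨ (1 ≤ p ∧ p+2 ≤ n ∧ pval σ p < pval σ (p+1) ∧ pval σ (p+2) < pval σ (p+1))))).card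
      = n - 1 - 2 * pkF n (pval σ) := by
    have h2 := Finset.card_filter_add_card_filter_not
      (s := Finset.range (n+1))
      (p := fun p => p = 0 ∨ p = n
        ∨ (2 ≤ p ∧ p+1 ≤ n ∧ pval σ (p-1) < pval σ p ∧ pval σ (p+1) < pval σ p)
        ∨ (1 ≤ p ∧ p+2 ≤ n ∧ pval σ p < pval σ (p+1) ∧ pval σ (p+2) < pval σ (p+1)))
    rw [cntPk n hn (pval σ), Finset.card_range] at h2
    omega
  rw [hneg]
  simp only [nsmul_eq_mul]
  have e0 : pk σ = pkF n (pval σ) := rfl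
  have e1 : ((n - 1 - 2 * pkF n (pval σ) : ℕ) : ℤ) = (n : ℤ) - 1 - 2 * pkF n (pval σ) := by omega
  rw [e0, e1]
  push_cast
  ring

lemma pk_bound {n : ℕ} (hn : 1 ≤ n) (σ : Equiv.Perm (Fin n)) :
    2 * pk σ + 2 ≤ n + 1 := pkF_bound n hn (pval σ)

lemma des_bound {n : ℕ} (σ : Equiv.Perm (Fin n)) : des σ ≤ n - 1 := desF_le n (pval σ)

lemma worpitzky (m : ℕ) (hm : 1 ≤ m) :
    ∀ n : ℕ, ∑ π : Equiv.Perm (Fin n), zchoose ((m:ℤ) + n - 1 - des π) n = (m:ℤ)^n := by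
  intro n
  induction n with
  | zero =>
    have huniv : (Finset.univ : Finset (Equiv.Perm (Fin 0))) = {1} :=
      Finset.eq_singleton_iff_unique_mem.mpr ⟨Finset.mem_univ _, fun x _ => Subsingleton.elim x 1⟩
    rw [huniv, Finset.sum_singleton]
    have hdes : des (1 : Equiv.Perm (Fin 0)) = 0 := by
      unfold des
      rw [show Finset.Icc 1 (0-1) = ∅ from Finset.Icc_eq_empty (by omega)]
      simp
    rw [hdes]
    rw [show (m:ℤ) + (0:ℕ) - 1 - (0:ℕ) = (m:ℤ) - 1 by push_cast; ring]
    simp only [Nat.cast_zero]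
    rw [zchoose_zero _ (by omega), pow_zero]
  | succ n ih =>
    calc ∑ π : Equiv.Perm (Fin (n+1)), zchoose ((m:ℤ) + (n+1:ℕ) - 1 - des π) ((n+1:ℕ):ℤ)
        = ∑ σ : Equiv.Perm (Fin n),
            (((des σ : ℤ) + 1) * zchoose ((m:ℤ) + (n+1:ℕ) - 1 - des σ) ((n+1:ℕ):ℤ)
              + ((n : ℤ) - des σ) * zchoose ((m:ℤ) + (n+1:ℕ) - 1 - (des σ + 1:ℕ)) ((n+1:ℕ):ℤ)) :=
          recA n (fun d => zchoose ((m:ℤ) + (n+1:ℕ) - 1 - d) ((n+1:ℕ):ℤ))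
      _ = ∑ σ : Equiv.Perm (Fin n), (m:ℤ) * zchoose ((m:ℤ) + n - 1 - des σ) n := by
          refine Finset.sum_congr rfl fun σ _ => ?_
          have hd : des σ ≤ n - 1 := des_bound σ
          have hx : 0 ≤ (m:ℤ) + n - 1 - des σ := by omega
          have e1 : (m:ℤ) + (n+1:ℕ) - 1 - des σ = ((m:ℤ) + n - 1 - des σ) + 1 := by
            push_cast; ring
          have e2 : (m:ℤ) + (n+1:ℕ) - 1 - ((des σ + 1:ℕ):ℤ) = (m:ℤ) + n - 1 - des σ := by
            push_cast; ring
          have e3 : ((n+1:ℕ):ℤ) = (n:ℤ) + 1 := by push_cast; ring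
          rw [e1, e2, e3, worp_step ((m:ℤ) + n - 1 - des σ) (des σ) n hx]
          rw [show (m:ℤ) + n - 1 - des σ + 1 + des σ - n = (m:ℤ) by ring]
      _ = (m:ℤ) * (m:ℤ)^n := by rw [← Finset.mul_sum, ih]
      _ = (m:ℤ)^(n+1) := by ring

lemma stem :
    ∀ n : ℕ, 1 ≤ n → ∀ j : ℤ,
      ∑ π : Equiv.Perm (Fin n), 2 * 4^(pk π) * zchoose ((n:ℤ) - 1 - 2*(pk π)) (j - (pk π))
        = 2^n * ∑ π : Equiv.Perm (Fin n), (if (des π : ℤ) = j then 1 else 0) := by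
  intro n
  induction n with
  | zero => intro h; exact absurd h (by norm_num)
  | succ n ih =>
    intro _ j
    rcases Nat.eq_zero_or_pos n with h0 | hn
    · subst h0
      have huniv : (Finset.univ : Finset (Equiv.Perm (Fin 1))) = {1} :=
        Finset.eq_singleton_iff_unique_mem.mpr
          ⟨Finset.mem_univ _, fun x _ => Subsingleton.elim x 1⟩
      have hdes : des (1 : Equiv.Perm (Fin 1)) = 0 := by
        unfold des
        rw [show Finset.Icc 1 (1-1) = ∅ from Finset.Icc_eq_empty (by omega)]
        simp
      have hpk : pk (1 : Equiv.Perm (Fin 1)) = 0 := by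
        unfold pk
        rw [show Finset.Icc 2 (1-1) = ∅ from Finset.Icc_eq_empty (by omega)]
        simp
      rw [huniv, Finset.sum_singleton, Finset.sum_singleton, hdes, hpk]
      have hz : zchoose (((0:ℕ)+1:ℕ) - 1 - 2*((0:ℕ):ℤ)) (j - ((0:ℕ):ℤ))
          = if ((0:ℕ):ℤ) = j then 1 else 0 := by
        rcases lt_trichotomy j 0 with h | h | h
        · rw [if_neg (by push_cast; omega)]
          exact zchoose_neg (by push_cast; omega)
        · subst h
          rw [if_pos (by norm_num)]
          rw [show (((0:ℕ)+1:ℕ):ℤ) - 1 - 2*((0:ℕ):ℤ) = 0 by norm_num,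
            show (0:ℤ) - ((0:ℕ):ℤ) = 0 by norm_num]
          exact zchoose_zero 0 le_rfl
        · rw [if_neg (by push_cast; omega)]
          exact zchoose_big (by push_cast; omega)
      rw [hz]
      norm_num
    · -- inductive step
      calc ∑ π : Equiv.Perm (Fin (n+1)),
              2 * 4^(pk π) * zchoose (((n+1:ℕ):ℤ) - 1 - 2*(pk π)) (j - (pk π))
          = ∑ σ : Equiv.Perm (Fin n),
              ((2*(pk σ : ℤ) + 2) * (2 * 4^(pk σ)
                  * zchoose (((n+1:ℕ):ℤ) - 1 - 2*(pk σ)) (j - (pk σ)))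
                + ((n : ℤ) - 1 - 2*(pk σ)) * (2 * 4^(pk σ + 1)
                  * zchoose (((n+1:ℕ):ℤ) - 1 - 2*((pk σ + 1:ℕ):ℤ)) (j - ((pk σ + 1:ℕ):ℤ)))) :=
            recW n hn (fun k => 2 * 4^k * zchoose (((n+1:ℕ):ℤ) - 1 - 2*(k:ℤ)) (j - (k:ℤ)))
        _ = ∑ σ : Equiv.Perm (Fin n),
              (2*(j+1) * (2 * 4^(pk σ) * zchoose ((n:ℤ) - 1 - 2*(pk σ)) (j - (pk σ)))
                + 2*((n:ℤ)+1-j) * (2 * 4^(pk σ) * zchoose ((n:ℤ) - 1 - 2*(pk σ)) (j-1 - (pk σ)))) := by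
            refine Finset.sum_congr rfl fun σ _ => ?_
            have hb2 : 2 * pk σ + 2 ≤ n + 1 := pk_bound hn σ
            have ha : (0:ℤ) ≤ (n:ℤ) - 1 - 2*(pk σ) := by omega
            have hstar := star_lemma (pk σ) ((n:ℤ) - 1 - 2*(pk σ)) (j - (pk σ)) ha
            rw [show (((n+1:ℕ)):ℤ) - 1 - 2*((pk σ:ℕ):ℤ) = ((n:ℤ) - 1 - 2*(pk σ)) + 1 from by
                push_cast; ring,
              show (((n+1:ℕ)):ℤ) - 1 - 2*(((pk σ + 1:ℕ)):ℤ) = ((n:ℤ) - 1 - 2*(pk σ)) - 1 from by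
                push_cast; ring,
              show (j - ((pk σ + 1:ℕ):ℤ)) = (j - (pk σ:ℤ)) - 1 from by push_cast; ring,
              show (j - 1 - ((pk σ:ℕ):ℤ)) = (j - (pk σ:ℤ)) - 1 from by push_cast; ring]
            linear_combination (2 * (4:ℤ)^(pk σ)) * hstar
        _ = 2*(j+1) * (∑ σ : Equiv.Perm (Fin n),
                2 * 4^(pk σ) * zchoose ((n:ℤ) - 1 - 2*(pk σ)) (j - (pk σ)))
              + 2*((n:ℤ)+1-j) * (∑ σ : Equiv.Perm (Fin n),
                2 * 4^(pk σ) * zchoose ((n:ℤ) - 1 - 2*(pk σ)) (j-1 - (pk σ))) := by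
            rw [Finset.sum_add_distrib, Finset.mul_sum, Finset.mul_sum]
        _ = 2*(j+1) * (2^n * ∑ σ : Equiv.Perm (Fin n), (if (des σ : ℤ) = j then 1 else 0))
              + 2*((n:ℤ)+1-j) * (2^n * ∑ σ : Equiv.Perm (Fin n),
                  (if (des σ : ℤ) = j-1 then 1 else 0)) := by
            rw [ih hn j, ih hn (j-1)]
        _ = 2^(n+1) * ((j+1) * (∑ σ : Equiv.Perm (Fin n), (if (des σ : ℤ) = j then 1 else 0))
              + ((n:ℤ)+1-j) * ∑ σ : Equiv.Perm (Fin n), (if (des σ : ℤ) = j-1 then 1 else 0)) := by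
            ring
        _ = 2^(n+1) * ∑ π : Equiv.Perm (Fin (n+1)), (if (des π : ℤ) = j then 1 else 0) := by
            congr 1
            have hA := recA n (fun d => if ((d:ℕ):ℤ) = j then 1 else 0)
            rw [hA]
            rw [Finset.sum_add_distrib, Finset.mul_sum, Finset.mul_sum]
            congr 1
            · refine Finset.sum_congr rfl fun σ _ => ?_
              by_cases h1 : (des σ : ℤ) = j
              · rw [if_pos h1, h1]
              · rw [if_neg h1]; ring
            · refine Finset.sum_congr rfl fun σ _ => ?_
              have e : ((des σ + 1 : ℕ) : ℤ) = (des σ : ℤ) + 1 := by push_cast; ring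
              rw [e]
              by_cases h1 : (des σ : ℤ) = j - 1
              · rw [if_pos (show (des σ:ℤ) + 1 = j by omega), if_pos h1, h1]; ring
              · rw [if_neg (show ¬((des σ:ℤ) + 1 = j) by omega), if_neg h1]; ring

theorem stmt14 (n m : ℕ) (hn : 1 ≤ n) (hm : 1 ≤ m) :
    ∑ π : Equiv.Perm (Fin n), opStar n (pk π) m = (2 * (m : ℤ)) ^ n := by
  classical
  have hA : ∀ π : Equiv.Perm (Fin n), opStar n (pk π) m
      = ∑ j ∈ Finset.range n, zchoose ((n:ℤ) - 1 + m - j) n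
          * (2 * 4^(pk π) * zchoose ((n:ℤ) - 1 - 2*(pk π)) ((j:ℤ) - (pk π))) := by
    intro π
    have hk2 : 2 * pk π + 2 ≤ n + 1 := pk_bound hn π
    have h1 := Finset.sum_range_add (fun i => zchoose ((n:ℤ) - 1 + m - i) n
        * (2 * 4^(pk π) * zchoose ((n:ℤ) - 1 - 2*(pk π)) ((i:ℤ) - (pk π)))) (pk π) (n+1)
    have h2 : (∑ i ∈ Finset.range (pk π), zchoose ((n:ℤ) - 1 + m - i) n
        * (2 * 4^(pk π) * zchoose ((n:ℤ) - 1 - 2*(pk π)) ((i:ℤ) - (pk π)))) = 0 := by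
      refine Finset.sum_eq_zero fun i hi => ?_
      rw [Finset.mem_range] at hi
      rw [zchoose_neg (show (i:ℤ) - (pk π) < 0 by omega)]
      ring
    have h3 : (∑ j ∈ Finset.range n, zchoose ((n:ℤ) - 1 + m - j) n
          * (2 * 4^(pk π) * zchoose ((n:ℤ) - 1 - 2*(pk π)) ((j:ℤ) - (pk π))))
        = ∑ i ∈ Finset.range (pk π + (n+1)), zchoose ((n:ℤ) - 1 + m - i) n
          * (2 * 4^(pk π) * zchoose ((n:ℤ) - 1 - 2*(pk π)) ((i:ℤ) - (pk π))) := by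
      refine Finset.sum_subset ?_ ?_
      · intro x hx
        rw [Finset.mem_range] at *
        omega
      · intro x hx hnx
        rw [Finset.mem_range] at hx hnx
        rw [zchoose_big (show (n:ℤ) - 1 - 2*(pk π) < (x:ℤ) - pk π by omega)]
        ring
    rw [h2, zero_add] at h1
    unfold opStar
    calc 2 * 4^(pk π) * (∑ b ∈ Finset.range (n + 1),
            zchoose ((n : ℤ) - 1 + m - (pk π + b)) n * zchoose ((n : ℤ) - 1 - 2 * pk π) b)
        = ∑ b ∈ Finset.range (n+1), zchoose ((n:ℤ) - 1 + m - ((pk π + b : ℕ):ℤ)) n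
            * (2 * 4^(pk π) * zchoose ((n:ℤ) - 1 - 2*(pk π)) (((pk π + b : ℕ):ℤ) - (pk π))) := by
          rw [Finset.mul_sum]
          refine Finset.sum_congr rfl fun b hb => ?_
          rw [show (((pk π + b : ℕ)):ℤ) = (pk π:ℤ) + (b:ℤ) from by push_cast; ring]
          rw [show (pk π:ℤ) + (b:ℤ) - (pk π:ℤ) = (b:ℤ) from by ring]
          ring
      _ = ∑ i ∈ Finset.range (pk π + (n+1)), zchoose ((n:ℤ) - 1 + m - i) n
            * (2 * 4^(pk π) * zchoose ((n:ℤ) - 1 - 2*(pk π)) ((i:ℤ) - (pk π))) := h1.symm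
      _ = _ := h3.symm
  calc ∑ π : Equiv.Perm (Fin n), opStar n (pk π) m
      = ∑ π : Equiv.Perm (Fin n), ∑ j ∈ Finset.range n, zchoose ((n:ℤ) - 1 + m - j) n
          * (2 * 4^(pk π) * zchoose ((n:ℤ) - 1 - 2*(pk π)) ((j:ℤ) - (pk π))) :=
        Finset.sum_congr rfl fun π _ => hA π
    _ = ∑ j ∈ Finset.range n, ∑ π : Equiv.Perm (Fin n), zchoose ((n:ℤ) - 1 + m - j) n
          * (2 * 4^(pk π) * zchoose ((n:ℤ) - 1 - 2*(pk π)) ((j:ℤ) - (pk π))) :=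
        Finset.sum_comm
    _ = ∑ j ∈ Finset.range n, zchoose ((n:ℤ) - 1 + m - j) n
          * ∑ π : Equiv.Perm (Fin n),
            (2 * 4^(pk π) * zchoose ((n:ℤ) - 1 - 2*(pk π)) ((j:ℤ) - (pk π))) :=
        Finset.sum_congr rfl fun j _ => (Finset.mul_sum _ _ _).symm
    _ = ∑ j ∈ Finset.range n, zchoose ((n:ℤ) - 1 + m - j) n
          * (2^n * ∑ π : Equiv.Perm (Fin n), (if (des π : ℤ) = (j:ℤ) then 1 else 0)) :=
        Finset.sum_congr rfl fun j _ => by rw [stem n hn (j:ℤ)]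
    _ = 2^n * ∑ j ∈ Finset.range n, ∑ π : Equiv.Perm (Fin n),
          zchoose ((n:ℤ) - 1 + m - j) n * (if (des π : ℤ) = (j:ℤ) then 1 else 0) := by
        rw [Finset.mul_sum]
        refine Finset.sum_congr rfl fun j _ => ?_
        rw [← Finset.mul_sum]
        ring
    _ = 2^n * ∑ π : Equiv.Perm (Fin n), ∑ j ∈ Finset.range n,
          zchoose ((n:ℤ) - 1 + m - j) n * (if (des π : ℤ) = (j:ℤ) then 1 else 0) := by
        rw [Finset.sum_comm]
    _ = 2^n * ∑ π : Equiv.Perm (Fin n), zchoose ((n:ℤ) - 1 + m - des π) n := by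
        congr 1
        refine Finset.sum_congr rfl fun π _ => ?_
        have hd : des π < n := by have := des_bound π; omega
        calc ∑ j ∈ Finset.range n,
              zchoose ((n:ℤ) - 1 + m - j) n * (if (des π : ℤ) = (j:ℤ) then 1 else 0)
            = ∑ j ∈ Finset.range n, (if des π = j then zchoose ((n:ℤ) - 1 + m - j) n else 0) := by
              refine Finset.sum_congr rfl fun j _ => ?_
              by_cases h : des π = j
              · rw [if_pos h, if_pos (by exact_mod_cast congrArg (Nat.cast (R := ℤ)) h), mul_one]
              · rw [if_neg h, if_neg (by exact_mod_cast fun hh => h (Nat.cast_injective hh)), mul_zero]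
          _ = zchoose ((n:ℤ) - 1 + m - des π) n := by
              rw [Finset.sum_ite_eq]
              exact if_pos (Finset.mem_range.mpr hd)
    _ = 2^n * ∑ π : Equiv.Perm (Fin n), zchoose ((m:ℤ) + n - 1 - des π) n := by
        congr 1
        refine Finset.sum_congr rfl fun π _ => ?_
        rw [show (n:ℤ) - 1 + m - des π = (m:ℤ) + n - 1 - des π from by ring]
    _ = 2^n * (m:ℤ)^n := by rw [worpitzky m hm n]
    _ = (2 * (m:ℤ))^n := by rw [mul_pow]
end
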